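/- arXiv:1905.02600 — 3 statements merged into one kernel-verified Lean document; each statement's English description precedes it below -/
import Mathlib

section
/- (Hakimi's Theorem) A graph $G$ decomposes into $k$ pseudoforests if and only if the maximum average degree of $G$ is at most $2k$. -/
open SimpleGraph

/-- A pseudoforest: every connected component contains at most one cycle,
i.e. any two cycles lying in the same connected component have the same edge set. -/
def IsPseudoforest {V : Type*} (G : SimpleGraph V) : Prop :=
  ∀ ⦃u w : V⦄ (p : G.Walk u u) (q : G.Walk w w),
    p.IsCycle → q.IsCycle → G.Reachable u w →
      ∀ e : Sym2 V, e ∈ p.edges ↔ e ∈ q.edges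

/-- A decomposition of `G`: edge-disjoint subgraphs whose edge sets partition `E(G)`. -/
def IsDecomposition {V : Type*} (G : SimpleGraph V) {n : ℕ}
    (H : Fin n → SimpleGraph V) : Prop :=
  (∀ i, H i ≤ G) ∧
    (Pairwise fun i j => Disjoint (H i).edgeSet (H j).edgeSet) ∧
    (⋃ i, (H i).edgeSet) = G.edgeSet

/-- `MadLE G x` says the maximum average degree of `G` is at most `x`:
every nonempty subgraph `H` satisfies `2 e(H) ≤ x v(H)`. -/
def MadLE {V : Type*} [Fintype V] (G : SimpleGraph V) (x : ℚ) : Prop :=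
  ∀ H : G.Subgraph, H.verts.Nonempty →
    2 * (H.edgeSet.ncard : ℚ) ≤ x * (H.verts.ncard : ℚ)

section HakimiAux

set_option linter.unusedSectionVars false

variable {V : Type*} [DecidableEq V]

lemma sym2_exists_eq {V : Type*} (e : Sym2 V) : ∃ a b, e = s(a, b) := by
  induction e using Sym2.ind with | _ a b => exact ⟨a, b, rfl⟩

/-- The two endpoints of an unordered pair, as a `Finset`. -/
def sym2Fin (e : Sym2 V) : Finset V :=
  Sym2.lift ⟨fun a b => {a, b}, fun a b => by simp [Finset.pair_comm]⟩ e

@[simp] lemma mem_sym2Fin {v : V} {e : Sym2 V} : v ∈ sym2Fin e ↔ v ∈ e := by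
  induction e using Sym2.ind with
  | _ a b => simp [sym2Fin, Sym2.mem_iff]

/-- The vertex set spanned by a finite set of edges. -/
def VS (F : Finset (Sym2 V)) : Finset V := F.biUnion sym2Fin

lemma mem_VS {v : V} {F : Finset (Sym2 V)} : v ∈ VS F ↔ ∃ e ∈ F, v ∈ e := by
  simp [VS]

lemma support_fromEdgeSet_subset_VS (F : Finset (Sym2 V)) :
    (fromEdgeSet (↑F : Set (Sym2 V))).support ⊆ ↑(VS F) := by
  intro v hv
  rw [mem_support] at hv
  obtain ⟨w, hw⟩ := hv
  rw [fromEdgeSet_adj] at hw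
  exact mem_VS.2 ⟨s(v, w), hw.1, by simp⟩

lemma edgeSet_fromEdgeSet_of_not_isDiag (F : Finset (Sym2 V)) (hd : ∀ e ∈ F, ¬e.IsDiag) :
    (fromEdgeSet (↑F : Set (Sym2 V))).edgeSet = ↑F := by
  rw [edgeSet_fromEdgeSet]
  ext e
  simp only [Set.mem_diff, Set.mem_setOf_eq, Finset.mem_coe, and_iff_left_iff_imp]
  exact fun he => hd e he

lemma fromEdgeSet_erase (F : Finset (Sym2 V)) (e : Sym2 V) :
    fromEdgeSet (↑(F.erase e) : Set (Sym2 V)) =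
      fromEdgeSet (↑F : Set (Sym2 V)) \ fromEdgeSet {e} := by
  ext x y
  simp only [fromEdgeSet_adj, Finset.coe_erase, Set.mem_diff, sdiff_adj,
    Set.mem_singleton_iff, Finset.mem_coe, Finset.mem_erase]
  tauto

lemma reach_del {U : SimpleGraph V} {a b : V}
    (hr : (U \ fromEdgeSet {s(a, b)}).Reachable a b) :
    ∀ {x y : V}, U.Reachable x y → (U \ fromEdgeSet {s(a, b)}).Reachable x y := by
  intro x y h
  obtain ⟨w⟩ := h
  induction w with
  | nil => exact Reachable.refl _
  | @cons x' v' y' h p ih =>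
    refine Reachable.trans ?_ ih
    by_cases he : s(x', v') = s(a, b)
    · rw [Sym2.eq_iff] at he
      rcases he with ⟨rfl, rfl⟩ | ⟨rfl, rfl⟩
      · exact hr
      · exact hr.symm
    · exact Adj.reachable (by simp only [sdiff_adj, fromEdgeSet_adj]; exact ⟨h, fun hc => he hc.1⟩)

lemma reach_del_all {U : SimpleGraph V} {u : V} {c : U.Walk u u} (hc : c.IsCycle)
    {e : Sym2 V} (he : e ∈ c.edges) {x y : V} (h : U.Reachable x y) :
    (U \ fromEdgeSet {e}).Reachable x y := by
  induction e using Sym2.ind with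
  | _ a b =>
    have hr : (U \ fromEdgeSet {s(a, b)}).Reachable a b :=
      (adj_and_reachable_delete_edges_iff_exists_cycle.2 ⟨u, c, hc, he⟩).2
    exact reach_del hr h

lemma reachable_induce {U : SimpleGraph V} {s : Set V} (hsupp : U.support ⊆ s) :
    ∀ {x y : V} (_ : U.Walk x y) (hx : x ∈ s) (hy : y ∈ s),
      (U.induce s).Reachable ⟨x, hx⟩ ⟨y, hy⟩ := by
  intro x y w
  induction w with
  | nil => intro hx hy; exact Reachable.refl _
  | @cons x v y h p ih =>
    intro hx hy
    have hv : v ∈ s := hsupp ((mem_support U).2 ⟨x, h.symm⟩)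
    exact Reachable.trans (Adj.reachable (by simpa using h)) (ih hv hy)

lemma isAcyclic_induce {U : SimpleGraph V} {s : Set V} (h : U.IsAcyclic) :
    (U.induce s).IsAcyclic := by
  intro v c hc
  exact h _ (hc.map (f := (Embedding.induce (G := U) s).toHom) (Embedding.induce (G := U) s).injective)

lemma reach_other {U : SimpleGraph V} {e : Sym2 V} (he : e ∈ U.edgeSet) {a x y : V}
    (hx : x ∈ e) (hy : y ∈ e) (h : U.Reachable a x) : U.Reachable a y := by
  induction e using Sym2.ind with
  | _ c d =>
    have hadj : U.Adj c d := he
    rcases Sym2.mem_iff.1 hx with rfl | rfl <;> rcases Sym2.mem_iff.1 hy with rfl | rfl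
    · exact h
    · exact h.trans hadj.reachable
    · exact h.trans hadj.symm.reachable
    · exact h

lemma mem_support_of_mem_edges {U : SimpleGraph V} {u v : V} {p : U.Walk u v}
    {e : Sym2 V} {x : V} (he : e ∈ p.edges) (hx : x ∈ e) : x ∈ p.support := by
  induction e using Sym2.ind with
  | _ a b =>
    rcases Sym2.mem_iff.1 hx with rfl | rfl
    · exact Walk.fst_mem_support_of_mem_edges p he
    · exact Walk.snd_mem_support_of_mem_edges p he



lemma rel_tree (F : Finset (Sym2 V)) (hd : ∀ e ∈ F, ¬e.IsDiag) (s : Finset V)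
    (hsupp : (fromEdgeSet (↑F : Set (Sym2 V))).support ⊆ ↑s)
    (hconn : ∀ x ∈ s, ∀ y ∈ s, (fromEdgeSet (↑F : Set (Sym2 V))).Reachable x y)
    (hne : s.Nonempty)
    (hacyc : (fromEdgeSet (↑F : Set (Sym2 V))).IsAcyclic) :
    F.card + 1 = s.card := by
  set U : SimpleGraph V := fromEdgeSet (↑F : Set (Sym2 V)) with hU
  set Us : SimpleGraph (↑s : Set V) := U.induce ↑s with hUs
  haveI : Fintype Us.edgeSet := Fintype.ofFinite _
  have hUsconn : Us.Connected := by
    rw [connected_iff]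
    refine ⟨?_, ⟨⟨hne.choose, hne.choose_spec⟩⟩⟩
    rintro ⟨x, hx⟩ ⟨y, hy⟩
    obtain ⟨w⟩ := hconn x (Finset.mem_coe.1 hx) y (Finset.mem_coe.1 hy)
    exact reachable_induce hsupp w hx hy
  have htree : Us.IsTree := ⟨hUsconn, isAcyclic_induce hacyc⟩
  have hcard := htree.card_edgeFinset
  have hV : Fintype.card (↑s : Set V) = s.card := by simp
  have hE : Us.edgeFinset.card = F.card := by
    refine Finset.card_bij (fun e _ => Sym2.map Subtype.val e) ?_ ?_ ?_
    · intro e he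
      rw [mem_edgeFinset] at he
      induction e using Sym2.ind with
      | _ a b =>
        have : U.Adj a.val b.val := he
        rw [hU, fromEdgeSet_adj] at this
        simpa using this.1
    · intro e₁ _ e₂ _ h
      exact Sym2.map.injective Subtype.val_injective h
    · intro e he
      induction e using Sym2.ind with
      | _ x y =>
        have hne' : x ≠ y := fun hxy => hd _ he (by simp [hxy])
        have hadj : U.Adj x y := by rw [hU, fromEdgeSet_adj]; exact ⟨he, hne'⟩
        have hx : x ∈ (↑s : Set V) := hsupp ((mem_support U).2 ⟨y, hadj⟩)
        have hy : y ∈ (↑s : Set V) := hsupp ((mem_support U).2 ⟨x, hadj.symm⟩)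
        refine ⟨s(⟨x, hx⟩, ⟨y, hy⟩), ?_, by simp⟩
        rw [mem_edgeFinset]
        exact hadj
  omega
lemma cycle_exists_edge {U : SimpleGraph V} {u : V} {c : U.Walk u u} (hc : c.IsCycle) :
    ∃ e, e ∈ c.edges := by
  refine List.exists_mem_of_length_pos ?_
  have := hc.three_le_length
  rw [Walk.length_edges]
  omega

lemma cycle_start_mem_support {U : SimpleGraph V} {u : V} {c : U.Walk u u} (hc : c.IsCycle) :
    u ∈ U.support := by
  cases c with
  | nil => exact absurd hc (by simp [Walk.isCycle_def])
  | cons h p => exact (mem_support U).2 ⟨_, h⟩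

lemma rel_card (n : ℕ) : ∀ (F : Finset (Sym2 V)), F.card ≤ n → (∀ e ∈ F, ¬e.IsDiag) →
    ∀ s : Finset V, (fromEdgeSet (↑F : Set (Sym2 V))).support ⊆ ↑s →
    (∀ x ∈ s, ∀ y ∈ s, (fromEdgeSet (↑F : Set (Sym2 V))).Reachable x y) →
    s.Nonempty → s.card ≤ F.card + 1 := by
  induction n with
  | zero =>
    intro F hFn hd s hsupp hconn hne
    have hF : F = ∅ := Finset.card_eq_zero.1 (Nat.le_zero.1 hFn)
    subst hF
    have hacyc : (fromEdgeSet (↑(∅ : Finset (Sym2 V)) : Set (Sym2 V))).IsAcyclic := by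
      simp only [Finset.coe_empty, fromEdgeSet_empty]; exact isAcyclic_bot
    have := rel_tree ∅ (by simp) s hsupp hconn hne hacyc
    omega
  | succ n ih =>
    intro F hFn hd s hsupp hconn hne
    by_cases hacyc : (fromEdgeSet (↑F : Set (Sym2 V))).IsAcyclic
    · have := rel_tree F hd s hsupp hconn hne hacyc; omega
    · unfold IsAcyclic at hacyc
      push_neg at hacyc
      obtain ⟨u, c, hc⟩ := hacyc
      obtain ⟨e₁, he₁⟩ := cycle_exists_edge hc
      have he₁F : e₁ ∈ F := by
        have := c.edges_subset_edgeSet he₁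
        rwa [edgeSet_fromEdgeSet_of_not_isDiag F hd] at this
      have key := fromEdgeSet_erase F e₁
      have hsub : fromEdgeSet (↑(F.erase e₁) : Set (Sym2 V)) ≤ fromEdgeSet (↑F : Set (Sym2 V)) := by
        rw [key]; exact sdiff_le
      have hcard := Finset.card_erase_add_one he₁F
      have h1 : s.card ≤ (F.erase e₁).card + 1 := by
        refine ih (F.erase e₁) (by omega) (fun e he => hd e (Finset.mem_of_mem_erase he)) s
          ((support_mono hsub).trans hsupp) ?_ hne
        intro x hx y hy
        rw [key]
        exact reach_del_all hc he₁ (hconn x hx y hy)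
      omega

lemma rel_nocycle (F : Finset (Sym2 V)) (hd : ∀ e ∈ F, ¬e.IsDiag) (s : Finset V)
    (hsupp : (fromEdgeSet (↑F : Set (Sym2 V))).support ⊆ ↑s)
    (hconn : ∀ x ∈ s, ∀ y ∈ s, (fromEdgeSet (↑F : Set (Sym2 V))).Reachable x y)
    {u : V} {c : (fromEdgeSet (↑F : Set (Sym2 V))).Walk u u} (hc : c.IsCycle) :
    s.card ≤ F.card := by
  have hne : s.Nonempty := ⟨u, Finset.mem_coe.1 (hsupp (cycle_start_mem_support hc))⟩
  obtain ⟨e₁, he₁⟩ := cycle_exists_edge hc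
  have he₁F : e₁ ∈ F := by
    have := c.edges_subset_edgeSet he₁
    rwa [edgeSet_fromEdgeSet_of_not_isDiag F hd] at this
  have key := fromEdgeSet_erase F e₁
  have hsub : fromEdgeSet (↑(F.erase e₁) : Set (Sym2 V)) ≤ fromEdgeSet (↑F : Set (Sym2 V)) := by
    rw [key]; exact sdiff_le
  have hcard := Finset.card_erase_add_one he₁F
  have h1 : s.card ≤ (F.erase e₁).card + 1 := by
    refine rel_card (F.erase e₁).card (F.erase e₁) le_rfl
      (fun e he => hd e (Finset.mem_of_mem_erase he)) s
      ((support_mono hsub).trans hsupp) ?_ hne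
    intro x hx y hy
    rw [key]
    exact reach_del_all hc he₁ (hconn x hx y hy)
  omega

lemma rel_unique (F : Finset (Sym2 V)) (hd : ∀ e ∈ F, ¬e.IsDiag) (s : Finset V)
    (hsupp : (fromEdgeSet (↑F : Set (Sym2 V))).support ⊆ ↑s)
    (hconn : ∀ x ∈ s, ∀ y ∈ s, (fromEdgeSet (↑F : Set (Sym2 V))).Reachable x y)
    (hcard : F.card ≤ s.card)
    {u w : V} {p : (fromEdgeSet (↑F : Set (Sym2 V))).Walk u u}
    {q : (fromEdgeSet (↑F : Set (Sym2 V))).Walk w w}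
    (hp : p.IsCycle) (hq : q.IsCycle) :
    ∀ e ∈ p.edges, e ∈ q.edges := by
  intro e he
  by_contra heq
  have heF : e ∈ F := by
    have := p.edges_subset_edgeSet he
    rwa [edgeSet_fromEdgeSet_of_not_isDiag F hd] at this
  have key := fromEdgeSet_erase F e
  have hsub : fromEdgeSet (↑(F.erase e) : Set (Sym2 V)) ≤ fromEdgeSet (↑F : Set (Sym2 V)) := by
    rw [key]; exact sdiff_le
  -- transfer q to the deleted graph
  have hq' : ∀ e' ∈ q.edges, e' ∈ (fromEdgeSet (↑(F.erase e) : Set (Sym2 V))).edgeSet := by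
    intro e' he'
    rw [edgeSet_fromEdgeSet_of_not_isDiag (F.erase e)
      (fun x hx => hd x (Finset.mem_of_mem_erase hx))]
    have he'F : e' ∈ F := by
      have := q.edges_subset_edgeSet he'
      rwa [edgeSet_fromEdgeSet_of_not_isDiag F hd] at this
    refine Finset.mem_coe.2 (Finset.mem_erase.2 ⟨?_, he'F⟩)
    rintro rfl
    exact heq he'
  have hqc : ((q.transfer _ hq')).IsCycle := hq.transfer hq'
  have h1 : s.card ≤ (F.erase e).card := by
    refine rel_nocycle (F.erase e) (fun x hx => hd x (Finset.mem_of_mem_erase hx)) s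
      ((support_mono hsub).trans hsupp) ?_ hqc
    intro x hx y hy
    rw [key]
    exact reach_del_all hp he (hconn x hx y hy)
  have := Finset.card_erase_add_one heF
  omega

lemma rel_pf_count {P : SimpleGraph V} (hP : IsPseudoforest P) (F : Finset (Sym2 V))
    (hFP : (↑F : Set (Sym2 V)) ⊆ P.edgeSet) (s : Finset V)
    (hsupp : (fromEdgeSet (↑F : Set (Sym2 V))).support ⊆ ↑s)
    (hconn : ∀ x ∈ s, ∀ y ∈ s, (fromEdgeSet (↑F : Set (Sym2 V))).Reachable x y) :
    F.card ≤ s.card := by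
  have hd : ∀ e ∈ F, ¬e.IsDiag := fun e he => (P.not_isDiag_of_mem_edgeSet (hFP he))
  have hEF := edgeSet_fromEdgeSet_of_not_isDiag F hd
  have hUP : fromEdgeSet (↑F : Set (Sym2 V)) ≤ P := by
    calc fromEdgeSet (↑F : Set (Sym2 V)) ≤ fromEdgeSet P.edgeSet := fromEdgeSet_mono hFP
    _ = P := fromEdgeSet_edgeSet P
  by_cases hacyc : (fromEdgeSet (↑F : Set (Sym2 V))).IsAcyclic
  · rcases F.eq_empty_or_nonempty with rfl | ⟨e₀, he₀⟩
    · simp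
    · have hne : s.Nonempty := by
        obtain ⟨a, b, rfl⟩ := sym2_exists_eq e₀
        have hadj : (fromEdgeSet (↑F : Set (Sym2 V))).Adj a b := by
          rw [← mem_edgeSet, hEF]; exact Finset.mem_coe.2 he₀
        exact ⟨a, Finset.mem_coe.1 (hsupp ((mem_support _).2 ⟨b, hadj⟩))⟩
      have := rel_tree F hd s hsupp hconn hne hacyc
      omega
  · unfold IsAcyclic at hacyc
    push_neg at hacyc
    obtain ⟨u, c, hc⟩ := hacyc
    obtain ⟨e₁, he₁⟩ := cycle_exists_edge hc
    have he₁F : e₁ ∈ F := by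
      have := c.edges_subset_edgeSet he₁
      rwa [hEF] at this
    have key := fromEdgeSet_erase F e₁
    have hd' : ∀ e ∈ F.erase e₁, ¬e.IsDiag := fun e he => hd e (Finset.mem_of_mem_erase he)
    have hEF' := edgeSet_fromEdgeSet_of_not_isDiag (F.erase e₁) hd'
    have hsub : fromEdgeSet (↑(F.erase e₁) : Set (Sym2 V)) ≤ fromEdgeSet (↑F : Set (Sym2 V)) := by
      rw [key]; exact sdiff_le
    have hne : s.Nonempty := ⟨u, Finset.mem_coe.1 (hsupp (cycle_start_mem_support hc))⟩
    -- the graph with e₁ erased is acyclic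
    have hacyc' : (fromEdgeSet (↑(F.erase e₁) : Set (Sym2 V))).IsAcyclic := by
      intro w d hd''
      -- transfer both cycles to P
      have hcP : ∀ e ∈ c.edges, e ∈ P.edgeSet := fun e he =>
        hFP (by rw [← hEF]; exact c.edges_subset_edgeSet he)
      have hdP : ∀ e ∈ d.edges, e ∈ P.edgeSet := by
        intro e he
        refine hFP ?_
        have := d.edges_subset_edgeSet he
        rw [hEF'] at this
        exact Finset.mem_coe.2 (Finset.mem_of_mem_erase (Finset.mem_coe.1 this))
      have hreach : P.Reachable u w := by
        refine Reachable.mono hUP (hconn u (Finset.mem_coe.1 (hsupp (cycle_start_mem_support hc))) w ?_)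
        have : w ∈ (fromEdgeSet (↑(F.erase e₁) : Set (Sym2 V))).support := cycle_start_mem_support hd''
        exact Finset.mem_coe.1 (hsupp (support_mono hsub this))
      have hiff := hP (c.transfer P hcP) (d.transfer P hdP) (hc.transfer hcP) (hd''.transfer hdP) hreach e₁
      rw [Walk.edges_transfer, Walk.edges_transfer] at hiff
      have he₁d : e₁ ∈ d.edges := hiff.1 he₁
      have := d.edges_subset_edgeSet he₁d
      rw [hEF'] at this
      exact (Finset.mem_erase.1 (Finset.mem_coe.1 this)).1 rfl
    have := rel_tree (F.erase e₁) hd' s ((support_mono hsub).trans hsupp) ?_ hne hacyc'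
    · have := Finset.card_erase_add_one he₁F
      omega
    · intro x hx y hy
      rw [key]
      exact reach_del_all hc he₁ (hconn x hx y hy)

lemma pf_count {P : SimpleGraph V} (hP : IsPseudoforest P) :
    ∀ F : Finset (Sym2 V), (↑F : Set (Sym2 V)) ⊆ P.edgeSet → F.card ≤ (VS F).card := by
  classical
  intro F
  induction F using Finset.strongInduction with
  | _ F ih =>
    intro hFP
    rcases F.eq_empty_or_nonempty with rfl | ⟨e₀, he₀⟩
    · simp
    have hd : ∀ e ∈ F, ¬e.IsDiag := fun e he => P.not_isDiag_of_mem_edgeSet (hFP he)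
    have hEF := edgeSet_fromEdgeSet_of_not_isDiag F hd
    set U : SimpleGraph V := fromEdgeSet (↑F : Set (Sym2 V)) with hU
    obtain ⟨a, b, rfl⟩ := sym2_exists_eq e₀
    -- reachability from a within U
    have hmemedge : ∀ e ∈ F, e ∈ U.edgeSet := fun e he => by rw [hEF]; exact he
    set F₁ : Finset (Sym2 V) := F.filter (fun e => ∃ x ∈ e, U.Reachable a x) with hF₁
    set F₂ : Finset (Sym2 V) := F.filter (fun e => ¬∃ x ∈ e, U.Reachable a x) with hF₂
    have hreach₁ : ∀ e ∈ F₁, ∀ x ∈ e, U.Reachable a x := by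
      intro e he x hx
      rw [hF₁, Finset.mem_filter] at he
      obtain ⟨y, hy, hr⟩ := he.2
      exact reach_other (hmemedge e he.1) hy hx hr
    have hcards : F₁.card + F₂.card = F.card := Finset.card_filter_add_card_filter_not _
    have hsplit : ∀ e ∈ F, e ∈ F₁ ∨ e ∈ F₂ := by
      intro e he
      by_cases h : ∃ x ∈ e, U.Reachable a x
      · exact Or.inl (Finset.mem_filter.2 ⟨he, h⟩)
      · exact Or.inr (Finset.mem_filter.2 ⟨he, h⟩)
    have hVSdisj : Disjoint (VS F₁) (VS F₂) := by
      rw [Finset.disjoint_left]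
      intro x hx₁ hx₂
      obtain ⟨e₁, he₁, hxe₁⟩ := mem_VS.1 hx₁
      obtain ⟨e₂, he₂, hxe₂⟩ := mem_VS.1 hx₂
      rw [hF₂, Finset.mem_filter] at he₂
      exact he₂.2 ⟨x, hxe₂, hreach₁ e₁ he₁ x hxe₁⟩
    have hVSsub : VS F₁ ∪ VS F₂ ⊆ VS F := by
      intro x hx
      rcases Finset.mem_union.1 hx with h | h
      · obtain ⟨e, he, hxe⟩ := mem_VS.1 h
        exact mem_VS.2 ⟨e, Finset.mem_of_mem_filter e he, hxe⟩
      · obtain ⟨e, he, hxe⟩ := mem_VS.1 h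
        exact mem_VS.2 ⟨e, Finset.mem_of_mem_filter e he, hxe⟩
    have he₀₁ : s(a, b) ∈ F₁ := by
      refine Finset.mem_filter.2 ⟨he₀, a, by simp, Reachable.refl a⟩
    by_cases hF₂e : F₂ = ∅
    · -- connected case
      have hconn : ∀ x ∈ VS F, ∀ y ∈ VS F, U.Reachable x y := by
        have hra : ∀ x ∈ VS F, U.Reachable a x := by
          intro x hx
          obtain ⟨e, he, hxe⟩ := mem_VS.1 hx
          rcases hsplit e he with h | h
          · exact hreach₁ e h x hxe
          · rw [hF₂e] at h; simp at h
        intro x hx y hy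
        exact (hra x hx).symm.trans (hra y hy)
      exact rel_pf_count hP F hFP (VS F) (support_fromEdgeSet_subset_VS F) hconn
    · -- split case
      have hF₂ne : F₂.Nonempty := Finset.nonempty_of_ne_empty hF₂e
      have hss₁ : F₁ ⊂ F := by
        refine Finset.ssubset_iff_of_subset (Finset.filter_subset _ _) |>.2 ?_
        obtain ⟨e, he⟩ := hF₂ne
        rw [hF₂, Finset.mem_filter] at he
        exact ⟨e, he.1, fun hmem => (Finset.mem_filter.1 hmem).2 |> he.2⟩
      have hss₂ : F₂ ⊂ F := by
        refine Finset.ssubset_iff_of_subset (Finset.filter_subset _ _) |>.2 ?_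
        refine ⟨s(a, b), he₀, fun hmem => ?_⟩
        exact (Finset.mem_filter.1 hmem).2 ⟨a, by simp, Reachable.refl a⟩
      have h₁ := ih F₁ hss₁ (fun e he => hFP (Finset.filter_subset _ _ he))
      have h₂ := ih F₂ hss₂ (fun e he => hFP (Finset.filter_subset _ _ he))
      have : (VS F₁ ∪ VS F₂).card = (VS F₁).card + (VS F₂).card :=
        Finset.card_union_of_disjoint hVSdisj
      have hle := Finset.card_le_card hVSsub
      omega

lemma inj_pf {P : SimpleGraph V} (f : P.edgeSet → V) (hinj : Function.Injective f)
    (hf : ∀ e : P.edgeSet, f e ∈ (e : Sym2 V)) : IsPseudoforest P := by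
  classical
  -- it suffices to prove one inclusion
  suffices h : ∀ ⦃u w : V⦄ (p : P.Walk u u) (q : P.Walk w w),
      p.IsCycle → q.IsCycle → P.Reachable u w → ∀ e ∈ p.edges, e ∈ q.edges by
    intro u w p q hp hq hr e
    exact ⟨h p q hp hq hr e, h q p hq hp hr.symm e⟩
  intro u w p q hp hq hr e' he'
  obtain ⟨r⟩ := hr
  set F : Finset (Sym2 V) := (p.edges ++ q.edges ++ r.edges).toFinset with hF
  have hFP : (↑F : Set (Sym2 V)) ⊆ P.edgeSet := by
    intro e he
    rw [Finset.mem_coe, hF, List.mem_toFinset] at he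
    rcases List.mem_append.1 he with h | h
    · rcases List.mem_append.1 h with h | h
      · exact p.edges_subset_edgeSet h
      · exact q.edges_subset_edgeSet h
    · exact r.edges_subset_edgeSet h
  have hd : ∀ e ∈ F, ¬e.IsDiag := fun e he => P.not_isDiag_of_mem_edgeSet (hFP he)
  have hEF := edgeSet_fromEdgeSet_of_not_isDiag F hd
  set U : SimpleGraph V := fromEdgeSet (↑F : Set (Sym2 V)) with hU
  have hmem : ∀ {e : Sym2 V}, e ∈ F → e ∈ U.edgeSet := fun {e} he => by rw [hU, hEF]; exact he
  have hpU : ∀ e ∈ p.edges, e ∈ U.edgeSet := fun e he =>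
    hmem (by rw [hF, List.mem_toFinset]; exact List.mem_append.2 (Or.inl (List.mem_append.2 (Or.inl he))))
  have hqU : ∀ e ∈ q.edges, e ∈ U.edgeSet := fun e he =>
    hmem (by rw [hF, List.mem_toFinset]; exact List.mem_append.2 (Or.inl (List.mem_append.2 (Or.inr he))))
  have hrU : ∀ e ∈ r.edges, e ∈ U.edgeSet := fun e he =>
    hmem (by rw [hF, List.mem_toFinset]; exact List.mem_append.2 (Or.inr he))
  set pU := p.transfer U hpU with hpUdef
  set qU := q.transfer U hqU with hqUdef
  set rU := r.transfer U hrU with hrUdef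
  -- connectivity on VS F
  have hrua : ∀ x ∈ VS F, U.Reachable u x := by
    intro x hx
    obtain ⟨e, he, hxe⟩ := mem_VS.1 hx
    rw [hF, List.mem_toFinset] at he
    rcases List.mem_append.1 he with h | h
    · rcases List.mem_append.1 h with h | h
      · have hx' : x ∈ pU.support := by
          rw [hpUdef, Walk.support_transfer]
          exact mem_support_of_mem_edges h hxe
        exact ⟨pU.takeUntil x hx'⟩
      · have hx' : x ∈ qU.support := by
          rw [hqUdef, Walk.support_transfer]
          exact mem_support_of_mem_edges h hxe
        exact Reachable.trans ⟨rU⟩ ⟨qU.takeUntil x hx'⟩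
    · have hx' : x ∈ rU.support := by
        rw [hrUdef, Walk.support_transfer]
        exact mem_support_of_mem_edges h hxe
      exact ⟨rU.takeUntil x hx'⟩
  have hconn : ∀ x ∈ VS F, ∀ y ∈ VS F, U.Reachable x y := fun x hx y hy =>
    (hrua x hx).symm.trans (hrua y hy)
  -- cardinality via the injection
  have hcard : F.card ≤ (VS F).card := by
    have hInj : Set.InjOn (fun e : Sym2 V => if h : e ∈ P.edgeSet then f ⟨e, h⟩ else u) ↑F := by
      intro e₁ h₁ e₂ h₂ hee
      simp only [dif_pos (hFP h₁), dif_pos (hFP h₂)] at hee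
      exact Subtype.ext_iff.1 (hinj hee)
    refine Finset.card_le_card_of_injOn _ ?_ hInj
    intro e he
    simp only [dif_pos (hFP (Finset.mem_coe.2 he))]
    exact mem_VS.2 ⟨e, he, hf _⟩
  have := rel_unique F hd (VS F) (support_fromEdgeSet_subset_VS F) hconn hcard
    ((hp.transfer hpU : pU.IsCycle)) ((hq.transfer hqU : qU.IsCycle)) e'
    (by rw [Walk.edges_transfer]; exact he')
  rwa [Walk.edges_transfer] at this

lemma subgraph_vert_of_edge {G : SimpleGraph V} {S : G.Subgraph} {e : Sym2 V}
    (he : e ∈ S.edgeSet) {x : V} (hx : x ∈ e) : x ∈ S.verts := by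
  induction e using Sym2.ind with
  | _ a b =>
    rw [Subgraph.mem_edgeSet] at he
    rcases Sym2.mem_iff.1 hx with rfl | rfl
    · exact S.edge_vert he
    · exact S.edge_vert he.symm

lemma decomp_mad [Fintype V] {k : ℕ} (G : SimpleGraph V) (H : Fin k → SimpleGraph V)
    (hdec : IsDecomposition G H) (hpf : ∀ i, IsPseudoforest (H i)) :
    MadLE G (2 * (k : ℚ)) := by
  obtain ⟨hle, hdisj, hunion⟩ := hdec
  intro S hSne
  set W : Finset V := (Set.toFinite S.verts).toFinset with hW
  set ES : Finset (Sym2 V) := (Set.toFinite S.edgeSet).toFinset with hES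
  set F : Fin k → Finset (Sym2 V) :=
    fun i => (Set.toFinite (S.edgeSet ∩ (H i).edgeSet)).toFinset with hF
  have hFsub : ∀ i, (↑(F i) : Set (Sym2 V)) ⊆ (H i).edgeSet := by
    intro i e he
    rw [hF, Set.Finite.coe_toFinset] at he
    exact he.2
  have hFW : ∀ i, (F i).card ≤ W.card := by
    intro i
    refine (pf_count (hpf i) (F i) (hFsub i)).trans (Finset.card_le_card ?_)
    intro x hx
    obtain ⟨e, he, hxe⟩ := mem_VS.1 hx
    rw [hF, Set.Finite.mem_toFinset] at he
    rw [hW, Set.Finite.mem_toFinset]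
    exact subgraph_vert_of_edge he.1 hxe
  have hEbi : ES ⊆ Finset.univ.biUnion (fun i => F i) := by
    intro e he
    rw [hES, Set.Finite.mem_toFinset] at he
    have heG : e ∈ G.edgeSet := S.edgeSet_subset he
    rw [← hunion, Set.mem_iUnion] at heG
    obtain ⟨i, hi⟩ := heG
    refine Finset.mem_biUnion.2 ⟨i, Finset.mem_univ i, ?_⟩
    rw [hF, Set.Finite.mem_toFinset]
    exact ⟨he, hi⟩
  have hcount : ES.card ≤ k * W.card := by
    calc ES.card ≤ (Finset.univ.biUnion (fun i => F i)).card := Finset.card_le_card hEbi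
      _ ≤ ∑ i, (F i).card := Finset.card_biUnion_le
      _ ≤ ∑ _i : Fin k, W.card := Finset.sum_le_sum (fun i _ => hFW i)
      _ = k * W.card := by simp [Finset.sum_const, mul_comm]
  have hE : S.edgeSet.ncard = ES.card := Set.ncard_eq_toFinset_card _ (Set.toFinite _)
  have hV : S.verts.ncard = W.card := Set.ncard_eq_toFinset_card _ (Set.toFinite _)
  rw [hE, hV]
  have : (ES.card : ℚ) ≤ (k : ℚ) * (W.card : ℚ) := by exact_mod_cast hcount
  linarith

lemma mad_decomp [Fintype V] {k : ℕ} (G : SimpleGraph V) (hmad : MadLE G (2 * (k : ℚ))) :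
    ∃ H : Fin k → SimpleGraph V, IsDecomposition G H ∧ ∀ i, IsPseudoforest (H i) := by
  classical
  set t : G.edgeSet → Finset (V × Fin k) :=
    fun e => sym2Fin (e : Sym2 V) ×ˢ (Finset.univ : Finset (Fin k)) with ht
  have hall : ∀ s : Finset G.edgeSet, s.card ≤ (s.biUnion t).card := by
    intro s
    set F : Finset (Sym2 V) := s.image Subtype.val with hF
    have hcardF : F.card = s.card := Finset.card_image_of_injective s Subtype.val_injective
    have hFsub : (↑F : Set (Sym2 V)) ⊆ G.edgeSet := by
      intro e he
      rw [Finset.mem_coe, hF, Finset.mem_image] at he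
      obtain ⟨a, _, rfl⟩ := he
      exact a.2
    have hbi : s.biUnion t = VS F ×ˢ (Finset.univ : Finset (Fin k)) := by
      ext ⟨v, j⟩
      simp only [Finset.mem_biUnion, ht, Finset.mem_product, Finset.mem_univ, and_true,
        mem_sym2Fin, mem_VS, hF, Finset.mem_image]
      constructor
      · rintro ⟨e, hes, hv⟩
        exact ⟨e.val, ⟨e, hes, rfl⟩, hv⟩
      · rintro ⟨e, ⟨a, has, rfl⟩, hv⟩
        exact ⟨a, has, hv⟩
    rw [hbi, Finset.card_product, Finset.card_univ, Fintype.card_fin]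
    rcases F.eq_empty_or_nonempty with hFe | ⟨e₀, he₀⟩
    · have : s = ∅ := Finset.image_eq_empty.1 hFe
      simp [this]
    · obtain ⟨a, b, rfl⟩ := sym2_exists_eq e₀
      set S : G.Subgraph :=
        { verts := ↑(VS F)
          Adj := fun x y => s(x, y) ∈ F
          adj_sub := fun h => (mem_edgeSet G).1 (hFsub h)
          edge_vert := fun h => Finset.mem_coe.2 (mem_VS.2 ⟨_, h, Sym2.mem_mk_left _ _⟩)
          symm := ⟨fun x y h => by show s(y, x) ∈ F; rwa [Sym2.eq_swap]⟩ } with hS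
      have hvne : S.verts.Nonempty := ⟨a, Finset.mem_coe.2 (mem_VS.2 ⟨_, he₀, by simp⟩)⟩
      have hedge : S.edgeSet = ↑F := by
        ext e
        induction e using Sym2.ind with
        | _ x y => simp [hS, Subgraph.mem_edgeSet]
      have h2 := hmad S hvne
      rw [hedge, Set.ncard_coe_finset] at h2
      have hverts : S.verts.ncard = (VS F).card := by
        rw [hS]; exact Set.ncard_coe_finset _
      rw [hverts] at h2
      have hq : (F.card : ℚ) ≤ (k : ℚ) * ((VS F).card : ℚ) := by linarith
      have hn : F.card ≤ k * (VS F).card := by exact_mod_cast hq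
      calc s.card = F.card := hcardF.symm
        _ ≤ k * (VS F).card := hn
        _ = (VS F).card * k := Nat.mul_comm _ _
  obtain ⟨f, hfinj, hft⟩ := (Finset.all_card_le_biUnion_card_iff_exists_injective t).1 hall
  have hf1 : ∀ e : G.edgeSet, (f e).1 ∈ (e : Sym2 V) := by
    intro e
    have := hft e
    rw [ht] at this
    rw [Finset.mem_product] at this
    exact mem_sym2Fin.1 this.1
  set Ei : Fin k → Set (Sym2 V) := fun i => {e | ∃ h : e ∈ G.edgeSet, (f ⟨e, h⟩).2 = i} with hEi
  have hEsub : ∀ i, Ei i ⊆ G.edgeSet := by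
    rintro i e ⟨h, _⟩
    exact h
  set HH : Fin k → SimpleGraph V := fun i => fromEdgeSet (Ei i) with hHH
  have hEdge : ∀ i, (HH i).edgeSet = Ei i := by
    intro i
    rw [hHH, edgeSet_fromEdgeSet]
    ext e
    simp only [Set.mem_diff, Set.mem_setOf_eq, and_iff_left_iff_imp]
    exact fun he => G.not_isDiag_of_mem_edgeSet (hEsub i he)
  refine ⟨HH, ⟨?_, ?_, ?_⟩, ?_⟩
  · intro i
    calc HH i = fromEdgeSet (Ei i) := rfl
      _ ≤ fromEdgeSet G.edgeSet := fromEdgeSet_mono (hEsub i)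
      _ = G := fromEdgeSet_edgeSet G
  · intro i j hij
    rw [Set.disjoint_left]
    intro e hei hej
    rw [hEdge] at hei hej
    obtain ⟨h1, hi⟩ := hei
    obtain ⟨h2, hj⟩ := hej
    exact hij (hi ▸ hj ▸ rfl)
  · ext e
    simp only [Set.mem_iUnion]
    constructor
    · rintro ⟨i, hi⟩
      rw [hEdge] at hi
      exact hEsub i hi
    · intro he
      exact ⟨(f ⟨e, he⟩).2, by rw [hEdge]; exact ⟨he, rfl⟩⟩
  · intro i
    have hsub' : ∀ e : (HH i).edgeSet, (e : Sym2 V) ∈ G.edgeSet :=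
      fun e => hEsub i ((hEdge i) ▸ e.2)
    have hcol : ∀ e : (HH i).edgeSet, (f ⟨e.val, hsub' e⟩).2 = i := by
      rintro ⟨e, he⟩
      rw [hEdge] at he
      obtain ⟨h, hi⟩ := he
      exact hi
    refine inj_pf (fun e => (f ⟨e.val, hsub' e⟩).1) ?_ (fun e => hf1 _)
    intro e1 e2 h12
    have : f ⟨e1.val, hsub' e1⟩ = f ⟨e2.val, hsub' e2⟩ :=
      Prod.ext h12 ((hcol e1).trans (hcol e2).symm)
    have heq : (⟨e1.val, hsub' e1⟩ : G.edgeSet) = ⟨e2.val, hsub' e2⟩ := hfinj this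
    exact Subtype.ext (congrArg (fun x : G.edgeSet => x.val) heq)

end HakimiAux

/-- Hakimi's Theorem: `G` decomposes into `k` pseudoforests if and only if the
maximum average degree of `G` is at most `2k`. -/
theorem hakimi (k : ℕ) {V : Type*} [Fintype V] (G : SimpleGraph V) :
    (∃ H : Fin k → SimpleGraph V,
        IsDecomposition G H ∧ ∀ i, IsPseudoforest (H i)) ↔
      MadLE G (2 * (k : ℚ)) := by
  classical
  constructor
  · rintro ⟨H, hdec, hpf⟩
    exact decomp_mad G H hdec hpf
  · intro hmad
    exact mad_decomp G hmad
end

section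
/- A graph $G$ admits a decomposition into $k$ pseudoforests if and only if $G$ admits an orientation of its edges in which every vertex has outdegree at most $k$. -/
open SimpleGraph

/-- `o` is an orientation of `G`: each edge of `G` is replaced by exactly one arc. -/
def IsOrientation {V : Type*} (G : SimpleGraph V) (o : V → V → Prop) : Prop :=
  (∀ u v, o u v → G.Adj u v) ∧ ∀ u v, G.Adj u v → (o u v ↔ ¬ o v u)

/-- The outdegree of `v` in the directed graph `o`. -/
noncomputable def outDeg {V : Type*} (o : V → V → Prop) (v : V) : ℕ :=
  {u | o v u}.ncard

section Aux

variable {V : Type*}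

lemma two_incident {H : SimpleGraph V} {u x : V} (p : H.Walk u u) (hp : p.IsCycle)
    (hx : x ∈ p.support) :
    ∃ a b : V, a ≠ b ∧ s(x, a) ∈ p.edges ∧ s(x, b) ∈ p.edges := by
  classical
  have hrot := hp.rotate hx
  have hmem : ∀ e, e ∈ (p.rotate x hx).edges ↔ e ∈ p.edges := fun e =>
    (p.rotate_edges x hx).mem_iff
  revert hrot hmem
  generalize p.rotate x hx = c
  intro hrot hmem
  cases c with
  | nil => exact absurd rfl hrot.ne_nil
  | @cons _ v _ h q =>
    have h3 : 3 ≤ q.length + 1 := by simpa using hrot.three_le_length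
    have hne : q.darts ≠ [] := by
      have : q.darts.length = q.length := q.length_darts
      intro hq; rw [hq] at this; simp at this; omega
    set d := q.darts.getLast hne with hd
    have hdsnd : d.snd = x := by rw [hd, SimpleGraph.Walk.getLast_darts_eq_lastDart]; rfl
    have hdedge : d.edge ∈ q.edges := by
      rw [SimpleGraph.Walk.edges]
      exact List.mem_map_of_mem (List.getLast_mem hne)
    have hedge : s(x, d.fst) ∈ q.edges := by
      have : d.edge = s(d.fst, d.snd) := rfl
      rwa [this, hdsnd, Sym2.eq_swap] at hdedge
    refine ⟨v, d.fst, ?_, ?_, ?_⟩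
    · intro heq
      rw [← heq] at hedge
      have hnd := hrot.edges_nodup
      rw [SimpleGraph.Walk.edges_cons, List.nodup_cons] at hnd
      exact hnd.1 hedge
    · rw [← hmem, SimpleGraph.Walk.edges_cons]; exact List.mem_cons_self
    · rw [← hmem, SimpleGraph.Walk.edges_cons]; exact List.mem_cons_of_mem _ hedge

lemma isPseudoforest_of_functional [Fintype V] (H : SimpleGraph V) (r : V → V → Prop)
    (hadj : ∀ x y, H.Adj x y ↔ (r x y ∨ r y x))
    (hfun : ∀ x y z, r x y → r x z → y = z) : IsPseudoforest H := by
  classical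
  set σ : V → V := fun x => if h : ∃ y, r x y then h.choose else x with hσ
  have hr_im : ∀ {x y}, r x y → σ x = y := by
    intro x y h
    have hex : ∃ y, r x y := ⟨y, h⟩
    simp only [hσ, dif_pos hex]
    exact hfun _ _ _ hex.choose_spec h
  -- every support vertex of a cycle has its out-edge on the cycle
  have key : ∀ (u : V) (p : H.Walk u u), p.IsCycle →
      ∀ x ∈ p.support, s(x, σ x) ∈ p.edges := by
    intro u p hp
    set T : Sym2 V → V := fun e =>
      if h : ∃ z : V × V, e = s(z.1, z.2) ∧ r z.1 z.2 then h.choose.1 else u with hT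
    have hTspec : ∀ e ∈ p.edges, e = s(T e, σ (T e)) ∧ r (T e) (σ (T e)) := by
      intro e he
      induction e using Sym2.ind with
      | _ a b =>
        have hadj' : H.Adj a b := p.adj_of_mem_edges he
        have hex : ∃ z : V × V, s(a, b) = s(z.1, z.2) ∧ r z.1 z.2 := by
          rcases (hadj a b).1 hadj' with h | h
          · exact ⟨(a, b), rfl, h⟩
          · exact ⟨(b, a), Sym2.eq_swap.symm, h⟩
        simp only [hT, dif_pos hex]
        obtain ⟨h1, h2⟩ := hex.choose_spec
        rw [hr_im h2]
        exact ⟨h1, h2⟩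
    have hEcard : p.edges.toFinset.card = p.length := by
      rw [List.toFinset_card_of_nodup hp.edges_nodup, p.length_edges]
    have htail : p.support.tail ≠ [] := by
      have h1 := p.length_support
      have h3 := hp.three_le_length
      intro hemp
      have : p.support.length = 1 := by
        rw [SimpleGraph.Walk.support_eq_cons, hemp]; rfl
      omega
    have humem : u ∈ p.support.tail := by
      have hne : p.darts ≠ [] := by
        have h1 := p.length_darts
        have h3 := hp.three_le_length
        intro hq; rw [hq] at h1; simp at h1; omega
      have h2 : (p.darts.getLast hne).snd = u := by
        rw [SimpleGraph.Walk.getLast_darts_eq_lastDart]; rfl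
      have hmem : (p.darts.getLast hne).snd ∈ p.darts.map (·.snd) :=
        List.mem_map_of_mem (List.getLast_mem hne)
      rw [p.map_snd_darts] at hmem
      rwa [h2] at hmem
    have hScard : p.support.toFinset.card = p.length := by
      have h1 : p.support.toFinset = p.support.tail.toFinset := by
        conv_lhs => rw [SimpleGraph.Walk.support_eq_cons]
        rw [List.toFinset_cons, Finset.insert_eq_self.2 (List.mem_toFinset.2 humem)]
      rw [h1, List.toFinset_card_of_nodup hp.support_nodup]
      have := p.length_support
      have : p.support.tail.length + 1 = p.length + 1 := by
        rw [← this, SimpleGraph.Walk.support_eq_cons]; rfl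
      omega
    have hinj : Set.InjOn T ↑p.edges.toFinset := by
      intro e he e' he' hee
      obtain ⟨h1, -⟩ := hTspec e (List.mem_toFinset.1 (by exact_mod_cast he))
      obtain ⟨h1', -⟩ := hTspec e' (List.mem_toFinset.1 (by exact_mod_cast he'))
      rw [h1, h1', hee]
    have himg : p.edges.toFinset.image T ⊆ p.support.toFinset := by
      intro y hy
      obtain ⟨e, he, hTe⟩ := Finset.mem_image.1 hy
      obtain ⟨h1, -⟩ := hTspec e (List.mem_toFinset.1 he)
      rw [hTe] at h1
      exact List.mem_toFinset.2 (p.fst_mem_support_of_mem_edges (h1 ▸ List.mem_toFinset.1 he))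
    have heq : p.edges.toFinset.image T = p.support.toFinset := by
      apply Finset.eq_of_subset_of_card_le himg
      rw [hScard, Finset.card_image_of_injOn hinj, hEcard]
    intro x hx
    have : x ∈ p.edges.toFinset.image T := heq ▸ List.mem_toFinset.2 hx
    obtain ⟨e, he, hTe⟩ := Finset.mem_image.1 this
    obtain ⟨h1, -⟩ := hTspec e (List.mem_toFinset.1 he)
    rw [hTe] at h1
    exact h1 ▸ List.mem_toFinset.1 he
  have hclosed : ∀ (u : V) (p : H.Walk u u), p.IsCycle → ∀ x ∈ p.support, σ x ∈ p.support :=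
    fun u p hp x hx => p.snd_mem_support_of_mem_edges (key _ p hp x hx)
  have hsurj : ∀ (u : V) (p : H.Walk u u), p.IsCycle → ∀ x ∈ p.support,
      ∃ y ∈ p.support, σ y = x := by
    intro u p hp x hx
    obtain ⟨a, b, hab, ha, hb⟩ := two_incident p hp hx
    rcases (hadj x a).1 (p.adj_of_mem_edges ha) with h | h
    · rcases (hadj x b).1 (p.adj_of_mem_edges hb) with h' | h'
      · exact absurd (hfun _ _ _ h h') hab
      · exact ⟨b, p.snd_mem_support_of_mem_edges hb, hr_im h'⟩
    · exact ⟨a, p.snd_mem_support_of_mem_edges ha, hr_im h⟩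
  have hperiod : ∀ (u : V) (p : H.Walk u u), p.IsCycle → ∀ x ∈ p.support,
      ∃ n, 0 < n ∧ σ^[n] x = x := by
    intro u p hp x hx
    set A : Set V := {y | y ∈ p.support} with hA
    have hfin : A.Finite := Set.toFinite _
    have hmaps : Set.MapsTo σ A A := fun y hy => hclosed u p hp y hy
    have hSurjOn : Set.SurjOn σ A A := by
      intro y hy
      obtain ⟨z, hz, hzy⟩ := hsurj u p hp y hy
      exact ⟨z, hz, hzy⟩
    have hinj : Set.InjOn σ A :=
      ((hfin.surjOn_iff_bijOn_of_mapsTo hmaps).1 hSurjOn).injOn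
    have hiter : ∀ n, σ^[n] x ∈ A := by
      intro n; induction n with
      | zero => exact hx
      | succ n ih => rw [Function.iterate_succ_apply']; exact hmaps ih
    haveI : Finite ↥A := hfin.to_subtype
    obtain ⟨m, n, hmn, hme⟩ : ∃ m n : ℕ, m ≠ n ∧ σ^[m] x = σ^[n] x := by
      obtain ⟨m, n, hmn, h⟩ := Finite.exists_ne_map_eq_of_infinite
        (fun n : ℕ => (⟨σ^[n] x, hiter n⟩ : ↥A))
      exact ⟨m, n, hmn, by simpa [Subtype.ext_iff] using h⟩
    have cancel : ∀ m n, m < n → σ^[m] x = σ^[n] x → σ^[n - m] x = x := by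
      intro m
      induction m with
      | zero => intro n h he; simpa using he.symm
      | succ m ih =>
        intro n h he
        have hstep : σ^[m + 1] x = σ^[(n - 1) + 1] x := by
          rw [show n - 1 + 1 = n by omega]; exact he
        rw [Function.iterate_succ_apply', Function.iterate_succ_apply'] at hstep
        have h2 : σ^[m] x = σ^[n - 1] x := hinj (hiter m) (hiter (n - 1)) hstep
        have h3 := ih (n - 1) (by omega) h2
        rwa [show n - 1 - m = n - (m + 1) by omega] at h3
    rcases Nat.lt_or_ge m n with h | h
    · exact ⟨n - m, by omega, cancel m n h hme⟩
    · have h' : n < m := by omega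
      exact ⟨m - n, by omega, cancel n m h' hme.symm⟩
  have hedgechar : ∀ (u : V) (p : H.Walk u u), p.IsCycle → ∀ e,
      e ∈ p.edges ↔ ∃ x ∈ p.support, e = s(x, σ x) := by
    intro u p hp e
    constructor
    · intro he
      induction e using Sym2.ind with
      | _ a b =>
        rcases (hadj a b).1 (p.adj_of_mem_edges he) with h | h
        · exact ⟨a, p.fst_mem_support_of_mem_edges he, by rw [hr_im h]⟩
        · exact ⟨b, p.snd_mem_support_of_mem_edges he, by rw [hr_im h, Sym2.eq_swap]⟩
    · rintro ⟨x, hx, rfl⟩; exact key u p hp x hx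
  have main : ∀ (u w : V) (p : H.Walk u u) (q : H.Walk w w), p.IsCycle → q.IsCycle →
      H.Reachable u w → ∀ x ∈ q.support, x ∈ p.support := by
    intro u w p q hp hq hreach x hxq
    have hrx : H.Reachable u x := hreach.trans ⟨q.takeUntil x hxq⟩
    obtain ⟨m, hm, hσm⟩ := hperiod w q hq x hxq
    set A : Set V := {y | y ∈ p.support} with hA
    have hmaps : Set.MapsTo σ A A := fun y hy => hclosed u p hp y hy
    have hstep : ∀ {a b : V}, r a b → ((∃ n, σ^[n] a ∈ A) ↔ (∃ n, σ^[n] b ∈ A)) := by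
      intro a b hab
      constructor
      · rintro ⟨n, hn⟩
        match n, hn with
        | 0, hn =>
          have ha : a ∈ A := by simpa using hn
          have hb : b ∈ A := by rw [← hr_im hab]; exact hmaps ha
          exact ⟨0, by simpa using hb⟩
        | (n+1), hn =>
          refine ⟨n, ?_⟩
          rwa [Function.iterate_succ_apply, hr_im hab] at hn
      · rintro ⟨n, hn⟩
        exact ⟨n + 1, by rwa [Function.iterate_succ_apply, hr_im hab]⟩
    have hL : ∀ {a b : V}, H.Adj a b → ((∃ n, σ^[n] a ∈ A) ↔ (∃ n, σ^[n] b ∈ A)) := by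
      intro a b hab
      rcases (hadj a b).1 hab with h | h
      · exact hstep h
      · exact (hstep h).symm
    have hreachL : ∀ {a b : V}, H.Reachable a b →
        ((∃ n, σ^[n] a ∈ A) ↔ (∃ n, σ^[n] b ∈ A)) := by
      intro a b hab
      obtain ⟨wk⟩ := hab
      induction wk with
      | nil => exact Iff.rfl
      | cons h w ih => exact (hL h).trans ih
    obtain ⟨n, hn⟩ : ∃ n, σ^[n] x ∈ A :=
      (hreachL hrx).1 ⟨0, p.start_mem_support⟩
    have hbig : σ^[m * (n + 1)] x = x := by
      rw [Function.iterate_mul]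
      exact Function.iterate_fixed hσm (n + 1)
    have hge : m * (n + 1) - n + n = m * (n + 1) := by
      have : n < m * (n + 1) := by nlinarith
      omega
    have : σ^[m * (n + 1) - n] (σ^[n] x) ∈ A := (hmaps.iterate _) hn
    rwa [← Function.iterate_add_apply, hge, hbig] at this
  intro u w p q hp hq hreach e
  rw [hedgechar u p hp, hedgechar w q hq]
  constructor <;> rintro ⟨x, hx, rfl⟩
  · exact ⟨x, main w u q p hq hp hreach.symm x hx, rfl⟩
  · exact ⟨x, main u w p q hp hq hreach x hx, rfl⟩

lemma exists_cycle_of_card_le [Fintype V] (Γ : SimpleGraph V) [Fintype Γ.edgeSet]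
    (hc : Γ.Connected) (h : Fintype.card V ≤ Γ.edgeFinset.card) :
    ∃ (u : V) (c : Γ.Walk u u), c.IsCycle := by
  by_contra hcon
  push_neg at hcon
  have htree : Γ.IsTree := ⟨hc, fun v c hcyc => hcon v c hcyc⟩
  have := htree.card_edgeFinset
  omega

lemma lift_walk {S : SimpleGraph V} (c : S.ConnectedComponent) {x y : V}
    (w : S.Walk x y) (hx : x ∈ c.supp) (hy : y ∈ c.supp) :
    (S.induce c.supp).Reachable ⟨x, hx⟩ ⟨y, hy⟩ := by
  induction w with
  | nil => exact Reachable.refl _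
  | @cons a b d h w ih =>
    have hb : b ∈ c.supp := by
      rw [ConnectedComponent.mem_supp_iff] at hx ⊢
      rw [← hx]
      exact (ConnectedComponent.eq).2 h.symm.reachable
    have hadj : (S.induce c.supp).Adj ⟨a, hx⟩ ⟨b, hb⟩ := by
      simp [comap_adj]
      exact h
    exact hadj.reachable.trans (ih hb hy)

lemma no_dense [Fintype V] [DecidableEq V] {H : SimpleGraph V} (hH : IsPseudoforest H)
    (F : Finset (Sym2 V)) (hF : ↑F ⊆ H.edgeSet)
    (hmin : ∀ x : V, (∃ e ∈ F, x ∈ e) → 2 ≤ (F.filter (fun e => x ∈ e)).card)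
    (v : V) (hv : 3 ≤ (F.filter (fun e => v ∈ e)).card) : False := by
  classical
  set S : SimpleGraph V := SimpleGraph.fromEdgeSet ↑F with hS
  have hSadj : ∀ x y, S.Adj x y ↔ s(x, y) ∈ F := by
    intro x y
    rw [hS, fromEdgeSet_adj]
    constructor
    · exact fun h => by exact_mod_cast h.1
    · intro h
      exact ⟨by exact_mod_cast h, (H.mem_edgeSet.1 (hF h)).ne⟩
  have hSH : S ≤ H := by
    intro x y hxy
    exact H.mem_edgeSet.1 (hF ((hSadj x y).1 hxy))
  set c := S.connectedComponentMk v with hc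
  set D := c.supp with hD
  have hDadj : ∀ x y, x ∈ D → S.Adj x y → y ∈ D := by
    intro x y hx hxy
    rw [hD, ConnectedComponent.mem_supp_iff] at hx ⊢
    rw [← hx]
    exact (ConnectedComponent.eq).2 hxy.symm.reachable
  haveI : Fintype ↥D := Fintype.ofFinite _
  set S' : SimpleGraph ↥D := S.induce D with hS'
  haveI : DecidableRel S'.Adj := Classical.decRel _
  have hS'adj : ∀ (x y : ↥D), S'.Adj x y ↔ S.Adj ↑x ↑y := by
    intro x y; rw [hS']; simp [comap_adj]
  have hvD : v ∈ D := by rw [hD, ConnectedComponent.mem_supp_iff]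
  have hconn : S'.Connected := by
    rw [connected_iff]
    refine ⟨?_, ⟨⟨v, hvD⟩⟩⟩
    rintro ⟨x, hx⟩ ⟨y, hy⟩
    have hr : S.Reachable x y := by
      rw [hD, ConnectedComponent.mem_supp_iff] at hx hy
      exact (ConnectedComponent.eq).1 (hx.trans hy.symm)
    obtain ⟨w⟩ := hr
    exact lift_walk c w hx hy
  -- each vertex of D has an incident edge in F
  have hinc : ∀ x : V, x ∈ D → ∃ e ∈ F, x ∈ e := by
    intro x hx
    rcases eq_or_ne x v with rfl | hne
    · have : (F.filter (fun e => x ∈ e)).Nonempty := by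
        rw [← Finset.card_pos]; omega
      obtain ⟨e, he⟩ := this
      rw [Finset.mem_filter] at he
      exact ⟨e, he.1, he.2⟩
    · have hr : S.Reachable x v := by
        rw [hD, ConnectedComponent.mem_supp_iff] at hx
        exact (ConnectedComponent.eq).1 hx
      obtain ⟨w⟩ := hr
      cases w with
      | nil => exact absurd rfl hne
      | cons h w => exact ⟨s(x, _), (hSadj _ _).1 h, Sym2.mem_mk_left _ _⟩
  -- degrees in S' match F-degrees
  have hdegree : ∀ (x : V) (hx : x ∈ D),
      S'.degree ⟨x, hx⟩ = (F.filter (fun e => x ∈ e)).card := by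
    intro x hx
    rw [← card_neighborFinset_eq_degree]
    refine Finset.card_bij (fun y _ => s(x, (y : V))) ?_ ?_ ?_
    · intro y hy
      rw [mem_neighborFinset, hS'adj] at hy
      exact Finset.mem_filter.2 ⟨(hSadj _ _).1 hy, Sym2.mem_mk_left _ _⟩
    · intro y1 h1 y2 h2 heq
      exact Subtype.ext (Sym2.congr_right.1 heq)
    · intro e he
      rw [Finset.mem_filter] at he
      obtain ⟨y, rfl⟩ := Sym2.mem_iff_exists.1 he.2
      have hadj : S.Adj x y := (hSadj x y).2 he.1
      have hyD : y ∈ D := hDadj x y hx hadj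
      refine ⟨⟨y, hyD⟩, ?_, rfl⟩
      rw [mem_neighborFinset, hS'adj]
      exact hadj
  -- handshake
  have hhand := S'.sum_degrees_eq_twice_card_edges
  have hsum : 2 * Fintype.card ↥D + 1 ≤ ∑ x : ↥D, S'.degree x := by
    have hv' : (⟨v, hvD⟩ : ↥D) ∈ Finset.univ := Finset.mem_univ _
    rw [← Finset.add_sum_erase _ _ hv']
    have h1 : 3 ≤ S'.degree ⟨v, hvD⟩ := by rw [hdegree v hvD]; exact hv
    have h2 : (Finset.univ.erase (⟨v, hvD⟩ : ↥D)).card * 2 ≤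
        ∑ x ∈ Finset.univ.erase (⟨v, hvD⟩ : ↥D), S'.degree x := by
      rw [← smul_eq_mul]
      apply Finset.card_nsmul_le_sum
      intro x hx
      have h5 := hdegree (x : V) x.2
      have h3 := hmin (x : V) (hinc _ x.2)
      have : S'.degree ⟨(x : V), x.2⟩ = S'.degree x := by congr
      omega
    have h4 : (Finset.univ.erase (⟨v, hvD⟩ : ↥D)).card = Fintype.card ↥D - 1 := by
      rw [Finset.card_erase_of_mem hv', Finset.card_univ]
    have h5 : 1 ≤ Fintype.card ↥D := Fintype.card_pos_iff.2 ⟨⟨v, hvD⟩⟩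
    omega
  have hecard : Fintype.card ↥D + 1 ≤ S'.edgeFinset.card := by omega
  -- first cycle
  obtain ⟨u1, c1, hc1⟩ := exists_cycle_of_card_le S' hconn (by omega)
  have hne1 : c1.edges ≠ [] := by
    intro hnil
    have := hc1.three_le_length
    have := c1.length_edges
    rw [hnil] at this
    simp at this
    omega
  have he0 : c1.edges.head hne1 ∈ c1.edges := List.head_mem hne1
  set e0 := c1.edges.head hne1 with he0def
  clear_value e0
  induction e0 using Sym2.ind with
  | _ a b =>
  have hab : S'.Adj a b := c1.adj_of_mem_edges he0
  have hreach0 : (S' \ fromEdgeSet {s(a, b)}).Reachable a b :=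
    (adj_and_reachable_delete_edges_iff_exists_cycle.2 ⟨u1, c1, hc1, he0⟩).2
  set Γ2 : SimpleGraph ↥D := S' \ fromEdgeSet {s(a, b)} with hΓ2
  haveI : DecidableRel Γ2.Adj := Classical.decRel _
  have hΓ2le : Γ2 ≤ S' := sdiff_le
  have hΓ2adj : ∀ x y : ↥D, Γ2.Adj x y ↔ S'.Adj x y ∧ s(x, y) ≠ s(a, b) := by
    intro x y
    rw [hΓ2, sdiff_adj, fromEdgeSet_adj]
    constructor
    · rintro ⟨h1, h2⟩
      refine ⟨h1, fun heq => h2 ⟨by rw [heq]; rfl, h1.ne⟩⟩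
    · rintro ⟨h1, h2⟩
      exact ⟨h1, fun hh => h2 (by simpa using hh.1)⟩
  have hΓ2conn : Γ2.Connected := by
    rw [connected_iff]
    refine ⟨?_, ⟨⟨v, hvD⟩⟩⟩
    intro x y
    obtain ⟨w⟩ := hconn.preconnected x y
    induction w with
    | nil => exact Reachable.refl _
    | @cons p q t h w ih =>
      refine Reachable.trans ?_ ih
      by_cases he : s(p, q) = s(a, b)
      · rcases Sym2.eq_iff.1 he with ⟨rfl, rfl⟩ | ⟨rfl, rfl⟩
        · exact hreach0
        · exact hreach0.symm
      · exact ((hΓ2adj p q).2 ⟨h, he⟩).reachable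
  have hedge2 : Γ2.edgeFinset = S'.edgeFinset.erase s(a, b) := by
    ext e
    rw [Finset.mem_erase, mem_edgeFinset, mem_edgeFinset, hΓ2, edgeSet_sdiff,
      edgeSet_fromEdgeSet, Set.mem_diff, Set.mem_diff]
    constructor
    · rintro ⟨h1, h2⟩
      refine ⟨fun heq => h2 ⟨heq ▸ rfl, ?_⟩, h1⟩
      · rw [heq]; simpa using hab.ne
    · rintro ⟨h1, h2⟩
      exact ⟨h2, fun hh => h1 hh.1⟩
  have hecard2 : Fintype.card ↥D ≤ Γ2.edgeFinset.card := by
    rw [hedge2, Finset.card_erase_of_mem (mem_edgeFinset.2 hab)]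
    omega
  obtain ⟨u2, c2, hc2⟩ := exists_cycle_of_card_le Γ2 hΓ2conn hecard2
  -- now map everything into H
  have hf3 : ∀ x y : V, S.Adj x y → H.Adj x y := hSH
  let f1 : Γ2 →g S' := Hom.ofLE hΓ2le
  let f2 : S' →g S := (SimpleGraph.Embedding.induce D).toHom
  let f3 : S →g H := Hom.ofLE hSH
  have hinj1 : Function.Injective f1 := by
    intro x y h
    simpa [f1, Hom.ofLE_apply] using h
  have hinj2 : Function.Injective f2 := Subtype.val_injective
  have hinj3 : Function.Injective f3 := by
    intro x y h
    simpa [f3, Hom.ofLE_apply] using h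
  let P1 : H.Walk ↑u1 ↑u1 := (c1.map f2).map f3
  let P2 : H.Walk ↑u2 ↑u2 := ((c2.map f1).map f2).map f3
  have hP1 : P1.IsCycle := (hc1.map hinj2).map hinj3
  have hP2 : P2.IsCycle := ((hc2.map hinj1).map hinj2).map hinj3
  have hreachH : H.Reachable ↑u1 ↑u2 := by
    have := hconn.preconnected u1 u2
    exact (this.map f2).map f3
  have hkey := hH P1 P2 hP1 hP2 hreachH s(↑a, ↑b)
  -- s(a,b) mapped is in P1
  have hin : s((a : V), (b : V)) ∈ P1.edges := by
    show s((a : V), (b : V)) ∈ ((c1.map f2).map f3).edges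
    simp only [P1, Walk.edges_map, List.mem_map]
    refine ⟨Sym2.map f2 s(a, b), ⟨s(a, b), he0, rfl⟩, ?_⟩
    simp [f2, f3, Sym2.map_pair_eq, Hom.ofLE_apply]
  have hnotin : s((a : V), (b : V)) ∉ P2.edges := by
    show s((a : V), (b : V)) ∉ (((c2.map f1).map f2).map f3).edges
    simp only [P2, Walk.edges_map, List.mem_map]
    rintro ⟨e', ⟨e'', ⟨e3, he3, rfl⟩, rfl⟩, heq⟩
    -- e3 ∈ c2.edges, mapped equals s(a,b)
    have he3' : e3 ∈ Γ2.edgeSet := c2.edges_subset_edgeSet he3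
    have : Sym2.map (fun z => (f2 z : V)) (Sym2.map f1 e3) = s((a : V), (b : V)) := by
      simpa [f3, Sym2.map_map, Hom.ofLE_apply] using heq
    have he3eq : e3 = s(a, b) := by
      have h2 : Sym2.map f1 e3 = Sym2.map f1 s(a, b) := by
        apply Sym2.map.injective hinj2
        exact this
      exact Sym2.map.injective hinj1 h2
    rw [he3eq] at he3'
    rw [mem_edgeSet, hΓ2adj] at he3'
    exact he3'.2 rfl
  rw [hkey] at hin
  exact hnotin hin

lemma crux [Fintype V] [DecidableEq V] {H : SimpleGraph V} (hH : IsPseudoforest H)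
    (F : Finset (Sym2 V)) (hF : ↑F ⊆ H.edgeSet) :
    F.card ≤ (F.biUnion fun e => Set.toFinset {x | x ∈ e}).card := by
  classical
  induction F using Finset.strongInduction with
  | _ F ih =>
  set W := F.biUnion (fun e => Set.toFinset {x | x ∈ e}) with hW
  have hWmem : ∀ x, x ∈ W ↔ ∃ e ∈ F, x ∈ e := by
    intro x
    simp [hW, Finset.mem_biUnion, Set.mem_toFinset]
  by_cases hdeg1 : ∃ x ∈ W, (F.filter (fun e => x ∈ e)).card = 1
  · obtain ⟨x, hxW, hx1⟩ := hdeg1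
    obtain ⟨e, he⟩ := Finset.card_eq_one.1 hx1
    have heF : e ∈ F ∧ x ∈ e := by
      have h2 : e ∈ F.filter (fun e => x ∈ e) := he ▸ Finset.mem_singleton_self e
      simpa using h2
    have hsub : F.erase e ⊂ F := Finset.erase_ssubset heF.1
    have hF'sub : ↑(F.erase e) ⊆ H.edgeSet := by
      intro e' he'
      exact hF (Finset.mem_coe.2 (Finset.mem_of_mem_erase (Finset.mem_coe.1 he')))
    have hIH := ih (F.erase e) hsub hF'sub
    have hW' : ((F.erase e).biUnion fun e => Set.toFinset {x | x ∈ e}) ⊆ W.erase x := by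
      intro y hy
      simp only [Finset.mem_biUnion, Set.mem_toFinset] at hy
      obtain ⟨e', he', hye⟩ := hy
      refine Finset.mem_erase.2 ⟨?_, (hWmem y).2 ⟨e', Finset.mem_of_mem_erase he', hye⟩⟩
      rintro rfl
      have h3 : e' ∈ F.filter (fun e => y ∈ e) :=
        Finset.mem_filter.2 ⟨Finset.mem_of_mem_erase he', hye⟩
      rw [he] at h3
      exact (Finset.mem_erase.1 he').1 (Finset.mem_singleton.1 h3)
    have h4 := Finset.card_le_card hW'
    have h5 : (W.erase x).card = W.card - 1 := Finset.card_erase_of_mem hxW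
    have h6 : F.card = (F.erase e).card + 1 := by
      rw [Finset.card_erase_of_mem heF.1]
      have : 1 ≤ F.card := Finset.card_pos.2 ⟨e, heF.1⟩
      omega
    have h7 : 1 ≤ W.card := Finset.card_pos.2 ⟨x, hxW⟩
    omega
  · push_neg at hdeg1
    by_cases hdeg3 : ∃ x ∈ W, 3 ≤ (F.filter (fun e => x ∈ e)).card
    · obtain ⟨v, hvW, hv3⟩ := hdeg3
      exact absurd (no_dense hH F hF (fun x hx => by
        have hxW : x ∈ W := (hWmem x).2 hx
        have h1 : 1 ≤ (F.filter (fun e => x ∈ e)).card := by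
          obtain ⟨e, he1, he2⟩ := hx
          exact Finset.card_pos.2 ⟨e, Finset.mem_filter.2 ⟨he1, he2⟩⟩
        have h2 := hdeg1 x hxW
        omega) v hv3) (fun h => h)
    · push_neg at hdeg3
      have hdeg2 : ∀ x ∈ W, (F.filter (fun e => x ∈ e)).card = 2 := by
        intro x hxW
        have h1 : 1 ≤ (F.filter (fun e => x ∈ e)).card := by
          obtain ⟨e, he1, he2⟩ := (hWmem x).1 hxW
          exact Finset.card_pos.2 ⟨e, Finset.mem_filter.2 ⟨he1, he2⟩⟩
        have h2 := hdeg1 x hxW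
        have h3 := hdeg3 x hxW
        omega
      -- double counting
      have hcount : ∑ x ∈ W, (F.filter (fun e => x ∈ e)).card
          = ∑ e ∈ F, (W.filter (fun x => x ∈ e)).card := by
        simp only [Finset.card_filter]
        exact Finset.sum_comm
      have hL : ∑ x ∈ W, (F.filter (fun e => x ∈ e)).card = 2 * W.card := by
        rw [Finset.sum_congr rfl hdeg2, Finset.sum_const, smul_eq_mul]
        ring
      have hR : ∑ e ∈ F, (W.filter (fun x => x ∈ e)).card = 2 * F.card := by
        have h2 : ∀ e ∈ F, (W.filter (fun x => x ∈ e)).card = 2 := by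
          intro e heF
          induction e using Sym2.ind with
          | _ a b =>
            have hadj : H.Adj a b := H.mem_edgeSet.1 (hF heF)
            have hfe : W.filter (fun x => x ∈ s(a, b)) = {a, b} := by
              ext y
              simp only [Finset.mem_filter, Finset.mem_insert, Finset.mem_singleton,
                Sym2.mem_iff]
              constructor
              · exact fun h => h.2
              · intro h
                exact ⟨(hWmem y).2 ⟨s(a, b), heF, Sym2.mem_iff.2 h⟩, h⟩
            rw [hfe, Finset.card_insert_of_notMem (by simp [hadj.ne]), Finset.card_singleton]
        rw [Finset.sum_congr rfl h2, Finset.sum_const, smul_eq_mul]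
        ring
      omega

lemma exists_orientation_of_pseudoforest [Fintype V] {H : SimpleGraph V}
    (hH : IsPseudoforest H) :
    ∃ r : V → V → Prop, IsOrientation H r ∧ ∀ v, Set.Subsingleton {u | r v u} := by
  classical
  have hHall : ∀ s : Finset ↥H.edgeSet,
      s.card ≤ (s.biUnion (fun e => Set.toFinset {x | x ∈ (e : Sym2 V)})).card := by
    intro s
    set F := s.image Subtype.val with hFdef
    have hFsub : ↑F ⊆ H.edgeSet := by
      intro e he
      simp only [hFdef, Finset.coe_image, Set.mem_image, Finset.mem_coe] at he
      obtain ⟨e', -, rfl⟩ := he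
      exact e'.2
    have hcard : F.card = s.card := Finset.card_image_of_injective _ Subtype.val_injective
    have hbi : s.biUnion (fun e => Set.toFinset {x | x ∈ (e : Sym2 V)})
        = F.biUnion (fun e => Set.toFinset {x | x ∈ e}) := by
      ext y
      simp [hFdef, Finset.mem_biUnion, Set.mem_toFinset]
    rw [hbi, ← hcard]
    exact crux hH F hFsub
  obtain ⟨f, hfinj, hfmem⟩ :=
    (Finset.all_card_le_biUnion_card_iff_exists_injective _).1 hHall
  have hfmem' : ∀ e : ↥H.edgeSet, f e ∈ (e : Sym2 V) := by
    intro e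
    have := hfmem e
    rwa [Set.mem_toFinset] at this
  refine ⟨fun x y => ∃ h : H.Adj x y, f ⟨s(x, y), H.mem_edgeSet.2 h⟩ = x, ⟨?_, ?_⟩, ?_⟩
  · rintro x y ⟨h, -⟩
    exact h
  · intro x y hxy
    have hsww : (⟨s(y, x), H.mem_edgeSet.2 hxy.symm⟩ : ↥H.edgeSet)
        = ⟨s(x, y), H.mem_edgeSet.2 hxy⟩ := Subtype.ext (Sym2.eq_swap)
    have hmem := hfmem' ⟨s(x, y), H.mem_edgeSet.2 hxy⟩
    rw [Sym2.mem_iff] at hmem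
    constructor
    · rintro ⟨h, hfx⟩ ⟨h', hfy⟩
      rw [hsww] at hfy
      exact hxy.ne (hfx.symm.trans hfy)
    · intro hn
      refine ⟨hxy, ?_⟩
      rcases hmem with h | h
      · exact h
      · exact absurd ⟨hxy.symm, by rw [hsww]; exact h⟩ hn
  · rintro v u ⟨h, hfu⟩ u' ⟨h', hfu'⟩
    have := hfinj (a₁ := ⟨s(v, u), H.mem_edgeSet.2 h⟩) (a₂ := ⟨s(v, u'), H.mem_edgeSet.2 h'⟩)
      (by rw [hfu, hfu'])
    have h2 : s(v, u) = s(v, u') := by simpa [Subtype.ext_iff] using this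
    exact Sym2.congr_right.1 h2

end Aux

/-- A graph `G` decomposes into `k` pseudoforests if and only if `G` admits an
orientation in which every vertex has outdegree at most `k`. -/
theorem pseudoforest_decomposition_iff_orientation (k : ℕ)
    {V : Type*} [Fintype V] (G : SimpleGraph V) :
    (∃ H : Fin k → SimpleGraph V,
        IsDecomposition G H ∧ ∀ i, IsPseudoforest (H i)) ↔
      ∃ o : V → V → Prop, IsOrientation G o ∧ ∀ v, outDeg o v ≤ k := by
  classical
  constructor
  · rintro ⟨Hs, ⟨hle, hdisj, hunion⟩, hpf⟩
    choose r hor hss using fun i => exists_orientation_of_pseudoforest (hpf i)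
    refine ⟨fun x y => ∃ i, r i x y, ⟨?_, ?_⟩, ?_⟩
    · rintro x y ⟨i, hi⟩
      exact hle i ((hor i).1 x y hi)
    · intro x y hxy
      have hmem : s(x, y) ∈ (⋃ i, (Hs i).edgeSet) := by
        rw [hunion]; exact hxy
      obtain ⟨i, hi⟩ := Set.mem_iUnion.1 hmem
      have huniq : ∀ j, (Hs j).Adj x y → j = i := by
        intro j hj
        by_contra hne
        exact Set.disjoint_left.1 (hdisj hne) ((Hs j).mem_edgeSet.2 hj) hi
      have hAdji : (Hs i).Adj x y := hi
      constructor
      · rintro ⟨j, hj⟩ ⟨j', hj'⟩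
        have e1 : j = i := huniq j ((hor j).1 x y hj)
        have e2 : j' = i := huniq j' ((hor j').1 y x hj').symm
        have hj2 : r i x y := e1 ▸ hj
        have hj'2 : r i y x := e2 ▸ hj'
        exact ((hor i).2 x y hAdji).1 hj2 hj'2
      · intro hn
        refine ⟨i, ?_⟩
        rw [(hor i).2 x y hAdji]
        intro hyx
        exact hn ⟨i, hyx⟩
    · intro v
      rw [outDeg]
      set O : Set V := {u | ∃ i, r i v u} with hO
      have hOc : ∀ u ∈ O, ∃ i, r i v u := fun u hu => hu
      choose gi hgi using hOc
      rcases O.eq_empty_or_nonempty with hOe | ⟨u0, hu0⟩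
      · rw [hOe]
        simp
      have : O.ncard ≤ (Set.univ : Set (Fin k)).ncard := by
        apply Set.ncard_le_ncard_of_injOn
          (fun u => if h : u ∈ O then gi u h else gi u0 hu0)
        · intro a ha; exact Set.mem_univ _
        · intro a ha b hb hab
          have hab' : gi a ha = gi b hb := by
            simpa [dif_pos ha, dif_pos hb] using hab
          have h1 := hgi a ha
          rw [hab'] at h1
          exact hss (gi b hb) v h1 (hgi b hb)
      rwa [Set.ncard_univ, Nat.card_eq_fintype_card, Fintype.card_fin] at this
  · rintro ⟨o, ⟨ho1, ho2⟩, hdeg⟩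
    have hemb : ∀ v : V, ∃ g : {u | o v u} → Fin k, Function.Injective g := by
      intro v
      haveI : Fintype ↥{u | o v u} := Fintype.ofFinite _
      have hcard : Fintype.card ↥{u | o v u} ≤ Fintype.card (Fin k) := by
        have h1 := hdeg v
        rw [outDeg, Set.ncard_eq_toFinset_card', Set.toFinset_card] at h1
        simpa using h1
      obtain ⟨g⟩ := Function.Embedding.nonempty_of_card_le hcard
      exact ⟨g, g.injective⟩
    choose g hginj using hemb
    set r : Fin k → V → V → Prop := fun i x y => ∃ h : o x y, g x ⟨y, h⟩ = i with hr
    have hfun : ∀ i x y z, r i x y → r i x z → y = z := by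
      rintro i x y z ⟨h1, hg1⟩ ⟨h2, hg2⟩
      have := hginj x (hg1.trans hg2.symm)
      simpa [Subtype.ext_iff] using this
    have hirr : ∀ (i : Fin k) (x : V), ¬ r i x x := by
      rintro i x ⟨h, -⟩
      exact G.irrefl (ho1 x x h)
    set Hs : Fin k → SimpleGraph V := fun i => SimpleGraph.fromRel (r i) with hHs
    have hadj : ∀ (i : Fin k) (x y : V), (Hs i).Adj x y ↔ (r i x y ∨ r i y x) := by
      intro i x y
      rw [hHs]
      simp only [fromRel_adj]
      constructor
      · exact fun h => h.2
      · intro h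
        refine ⟨?_, h⟩
        rintro rfl
        rcases h with h | h <;> exact hirr i x h
    have hGadj : ∀ (i : Fin k) (x y : V), (Hs i).Adj x y → G.Adj x y := by
      intro i x y hxy
      rcases (hadj i x y).1 hxy with ⟨h, -⟩ | ⟨h, -⟩
      · exact ho1 x y h
      · exact (ho1 y x h).symm
    refine ⟨Hs, ⟨fun i x y h => hGadj i x y h, ?_, ?_⟩, ?_⟩
    · intro i j hij
      rw [Set.disjoint_left]
      intro e hei hej
      induction e using Sym2.ind with
      | _ x y =>
        rw [mem_edgeSet] at hei hej
        have hoxy : ¬ (o x y ∧ o y x) := by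
          rintro ⟨h1, h2⟩
          exact ((ho2 x y (ho1 x y h1)).1 h1) h2
        rcases (hadj i x y).1 hei with ⟨h1, hg1⟩ | ⟨h1, hg1⟩ <;>
          rcases (hadj j x y).1 hej with ⟨h2, hg2⟩ | ⟨h2, hg2⟩
        · exact hij (by rw [← hg1, ← hg2])
        · exact hoxy ⟨h1, h2⟩
        · exact hoxy ⟨h2, h1⟩
        · exact hij (by rw [← hg1, ← hg2])
    · ext e
      induction e using Sym2.ind with
      | _ x y =>
        simp only [Set.mem_iUnion, mem_edgeSet]
        constructor
        · rintro ⟨i, hi⟩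
          exact hGadj i x y hi
        · intro hxy
          by_cases ho : o x y
          · exact ⟨g x ⟨y, ho⟩, (hadj _ x y).2 (Or.inl ⟨ho, rfl⟩)⟩
          · have hyx : o y x := by
              by_contra hn
              exact ho ((ho2 x y hxy).2 hn)
            exact ⟨g y ⟨x, hyx⟩, (hadj _ x y).2 (Or.inr ⟨hyx, rfl⟩)⟩
    · intro i
      exact isPseudoforest_of_functional (Hs i) (r i) (hadj i) (hfun i)
end

section
/- Fix positive integers $k$ and $d$. Let $G$ be an oriented graph in which every vertex has outdegree $k$ or $k+1$, equipped with a red-blue colouring: at every vertex, exactly $k$ outgoing arcs are blue and the remaining outgoing arc, if any, is red. Let $(x,y)$ be a blue arc, suppose the red component $R^y$ containing $y$ is acyclic, and let $e = xv$ be a red edge incident to $x$. Perform the exchange of $e$ and $(x,y)$: reverse the unique maximal directed red path in $R^y$ starting at $y$; recolour $(x,y)$ red and reorient it to $(y,x)$; recolour $e$ blue and orient it from $x$ to $v$. Then in the resulting oriented coloured graph, every vertex again has outdegree $k$ or $k+1$, and the colouring is again a red-blue colouring: every vertex has exactly $k$ outgoing blue arcs and at most one outgoing red arc. -/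
open SimpleGraph
open scoped Classical

/-- The number of outgoing blue arcs at `w` (arcs whose edge is not in `Red`). -/
noncomputable def blueOutDeg {V : Type*} (o : V → V → Prop) (Red : Set (Sym2 V))
    (w : V) : ℕ :=
  {u | o w u ∧ s(w, u) ∉ Red}.ncard

/-- The number of outgoing red arcs at `w` (arcs whose edge is in `Red`). -/
noncomputable def redOutDeg {V : Type*} (o : V → V → Prop) (Red : Set (Sym2 V))
    (w : V) : ℕ :=
  {u | o w u ∧ s(w, u) ∈ Red}.ncard

/-- The graph formed by the red edges. -/
def redGraph {V : Type*} (G : SimpleGraph V) (Red : Set (Sym2 V)) : SimpleGraph V where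
  Adj a b := G.Adj a b ∧ s(a, b) ∈ Red
  symm := by
    constructor
    intro a b hab
    exact ⟨hab.1.symm, by rw [Sym2.eq_swap]; exact hab.2⟩
  loopless := ⟨fun a h => h.1.ne rfl⟩

/-- The edges of a path given as a list of vertices. -/
def pathEdges {V : Type*} (l : List V) : Set (Sym2 V) :=
  {e | ∃ p ∈ l.zip l.tail, e = s(p.1, p.2)}

/-- The orientation resulting from exchanging the red edge `xv` and the blue arc
`(x,y)`, after reversing the maximal directed red path `l` starting at `y`:
the arcs along `l` are reversed, the edge `xy` is oriented from `y` to `x`, and the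
edge `xv` is oriented from `x` to `v`. -/
def exchOrient {V : Type*} (o : V → V → Prop) (x y v : V) (l : List V) :
    V → V → Prop :=
  fun a b =>
    if s(a, b) = s(x, y) then a = y ∧ b = x
    else if s(a, b) = s(x, v) then a = x ∧ b = v
    else if s(a, b) ∈ pathEdges l then o b a
    else o a b

/-- The red edge set resulting from the exchange: `xv` becomes blue and `xy`
becomes red. -/
def exchRed {V : Type*} (Red : Set (Sym2 V)) (x y v : V) : Set (Sym2 V) :=
  (Red \ {s(x, v)}) ∪ {s(x, y)}





lemma chain'_zip_tail {α : Type*} {R : α → α → Prop} :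
    ∀ {l : List α}, l.Chain' R → ∀ p ∈ l.zip l.tail, R p.1 p.2 := by
  intro l
  induction l with
  | nil => intro _ p hp; simp at hp
  | cons a t ih =>
    intro hc p hp
    cases t with
    | nil => simp at hp
    | cons b t' =>
      replace hc := List.isChain_cons_cons.mp hc
      simp only [List.tail_cons, List.zip_cons_cons, List.mem_cons] at hp
      rcases hp with rfl | hp
      · exact hc.1
      · exact ih hc.2 p (by simpa using hp)

lemma zip_tail_snd_unique {α : Type*} :
    ∀ {l : List α}, l.Nodup → ∀ p ∈ l.zip l.tail, ∀ q ∈ l.zip l.tail,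
      p.2 = q.2 → p.1 = q.1 := by
  intro l
  induction l with
  | nil => intro _ p hp; simp at hp
  | cons a t ih =>
    intro hnd p hp q hq heq
    cases t with
    | nil => simp at hp
    | cons b t' =>
      rw [List.nodup_cons] at hnd
      have hbt : b ∉ t' := (List.nodup_cons.mp hnd.2).1
      simp only [List.tail_cons, List.zip_cons_cons, List.mem_cons] at hp hq
      rcases hp with rfl | hp <;> rcases hq with rfl | hq
      · rfl
      · exfalso
        have : q.2 ∈ t' := (List.of_mem_zip (show (q.1, q.2) ∈ (b :: t').zip t' by simpa using hq)).2
        simp only [← heq] at this; exact hbt this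
      · exfalso
        have : p.2 ∈ t' := (List.of_mem_zip (show (p.1, p.2) ∈ (b :: t').zip t' by simpa using hp)).2
        simp only [heq] at this; exact hbt this
      · exact ih hnd.2 p (by simpa using hp) q (by simpa using hq) heq

lemma snd_mem_tail' {α : Type*} {l : List α} {p : α × α} (hp : p ∈ l.zip l.tail) :
    p.2 ∈ l.tail := by
  obtain ⟨p1, p2⟩ := p
  exact (List.of_mem_zip hp).2

lemma last_or_succ {α : Type*} :
    ∀ {l : List α} (h : l ≠ []) {a : α}, a ∈ l →
      a = l.getLast h ∨ ∃ b, (a, b) ∈ l.zip l.tail := by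
  intro l
  induction l with
  | nil => intro h; exact absurd rfl h
  | cons c t ih =>
    intro h a ha
    cases t with
    | nil => left; simp at ha; simp [ha]
    | cons d t' =>
      rcases List.mem_cons.mp ha with rfl | ha
      · right; exact ⟨d, by simp⟩
      · rcases ih (List.cons_ne_nil d t') ha with h1 | ⟨b, hb⟩
        · left; rw [List.getLast_cons (List.cons_ne_nil d t')]; exact h1
        · right; exact ⟨b, by simp only [List.tail_cons, List.zip_cons_cons, List.mem_cons]; right; exact hb⟩

lemma outDeg_split' {V : Type*} [Fintype V] (o : V → V → Prop) (Red : Set (Sym2 V)) (w : V) :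
    outDeg o w = blueOutDeg o Red w + redOutDeg o Red w := by
  have hdis : Disjoint {u | o w u ∧ s(w,u) ∉ Red} {u | o w u ∧ s(w,u) ∈ Red} := by
    rw [Set.disjoint_left]; rintro u ⟨_, h1⟩ ⟨_, h2⟩; exact h1 h2
  have hun : {u | o w u} = {u | o w u ∧ s(w,u) ∉ Red} ∪ {u | o w u ∧ s(w,u) ∈ Red} := by
    ext u; simp only [Set.mem_setOf_eq, Set.mem_union]; tauto
  unfold outDeg blueOutDeg redOutDeg
  rw [hun, Set.ncard_union_eq hdis]

lemma red_out_unique' {V : Type*} [Fintype V] {o : V → V → Prop} {Red : Set (Sym2 V)} {w a b : V}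
    (h : redOutDeg o Red w ≤ 1) (ha : o w a ∧ s(w,a) ∈ Red) (hb : o w b ∧ s(w,b) ∈ Red) :
    a = b := by
  by_contra hne
  have hsub : ({a, b} : Set V) ⊆ {u | o w u ∧ s(w,u) ∈ Red} := by
    intro u hu
    rcases hu with rfl | rfl
    · exact ha
    · exact hb
  have h2 := Set.ncard_le_ncard hsub (Set.toFinite _)
  rw [Set.ncard_pair hne] at h2
  unfold redOutDeg at h
  omega

lemma arc_eq_of_sym2_eq {V : Type*} {G : SimpleGraph V} {o : V → V → Prop}
    (horient : IsOrientation G o) {a b c d : V}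
    (hab : o a b) (hcd : o c d) (h : s(a,b) = s(c,d)) : a = c ∧ b = d := by
  rw [Sym2.eq_iff] at h
  rcases h with ⟨rfl, rfl⟩ | ⟨rfl, rfl⟩
  · exact ⟨rfl, rfl⟩
  · exact absurd hab ((horient.2 _ _ (horient.1 _ _ hcd)).mp hcd)

/-- Exchanging a red edge `e = xv` and a blue arc `(x,y)` (whose red component `Rʸ`
is acyclic) preserves the properties of the orientation and of the red-blue
colouring: afterwards every vertex again has outdegree `k` or `k+1`, exactly `k`
outgoing blue arcs, and at most one outgoing red arc. -/
theorem exchange_preserves_red_blue (k d : ℕ) (hk : 0 < k) (hd : 0 < d)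
    {V : Type*} [Fintype V] (G : SimpleGraph V)
    (o : V → V → Prop) (horient : IsOrientation G o)
    (houtdeg : ∀ w : V, outDeg o w = k ∨ outDeg o w = k + 1)
    (Red : Set (Sym2 V)) (hRed : Red ⊆ G.edgeSet)
    (hblue : ∀ w : V, blueOutDeg o Red w = k)
    (x y v : V)
    (hxy : o x y) (hxyblue : s(x, y) ∉ Red)
    (hacyc : ∀ w : V, (redGraph G Red).Reachable y w →
      ∀ p : (redGraph G Red).Walk w w, ¬ p.IsCycle)
    (hxv : G.Adj x v) (hxvred : s(x, v) ∈ Red)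
    (l : List V) (hl : l ≠ []) (hhead : l.head hl = y)
    (hchain : l.Chain' fun a b => o a b ∧ s(a, b) ∈ Red)
    (hnodup : l.Nodup)
    (hmaximal : ∀ u : V, ¬ (o (l.getLast hl) u ∧ s(l.getLast hl, u) ∈ Red)) :
    IsOrientation G (exchOrient o x y v l) ∧
      (∀ w : V, outDeg (exchOrient o x y v l) w = k ∨
        outDeg (exchOrient o x y v l) w = k + 1) ∧
      (∀ w : V, blueOutDeg (exchOrient o x y v l) (exchRed Red x y v) w = k) ∧
      (∀ w : V, redOutDeg (exchOrient o x y v l) (exchRed Red x y v) w ≤ 1) := by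
  have hGxy : G.Adj x y := horient.1 x y hxy
  have hxyne : x ≠ y := hGxy.ne
  have hxvne : x ≠ v := hxv.ne
  have hnoyx : ¬ o y x := (horient.2 x y hGxy).mp hxy
  have hexy : s(x, y) ≠ s(x, v) := fun h => hxyblue (h ▸ hxvred)
  have hpath_arc : ∀ p ∈ l.zip l.tail, o p.1 p.2 ∧ s(p.1, p.2) ∈ Red :=
    fun p hp => chain'_zip_tail hchain p hp
  have hpathRed : ∀ e ∈ pathEdges l, e ∈ Red := by
    rintro e ⟨p, hp, rfl⟩
    exact (hpath_arc p hp).2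
  have hredle : ∀ w, redOutDeg o Red w ≤ 1 := by
    intro w
    have h1 := outDeg_split' o Red w
    have h2 := hblue w
    rcases houtdeg w with h3 | h3 <;> omega
  have hredu : ∀ w a b, (o w a ∧ s(w,a) ∈ Red) → (o w b ∧ s(w,b) ∈ Red) → a = b :=
    fun w a b ha hb => red_out_unique' (hredle w) ha hb
  have htgt : ∀ w u, s(w, u) ∈ pathEdges l → o u w → (u, w) ∈ l.zip l.tail := by
    rintro w u ⟨p, hp, he⟩ houw
    have he' : s(u, w) = s(p.1, p.2) := by rw [Sym2.eq_swap]; exact he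
    obtain ⟨h1, h2⟩ := arc_eq_of_sym2_eq horient houw (hpath_arc p hp).1 he'
    subst h1; subst h2
    simpa using hp
  have hyl : y ∈ l := by rw [← hhead]; exact List.head_mem hl
  have hynt : y ∉ l.tail := by
    have h0 : l = y :: l.tail := by rw [← hhead]; exact (List.cons_head_tail hl).symm
    rw [h0] at hnodup
    exact (List.nodup_cons.mp hnodup).1
  have hd2y : ∀ u, s(y,u) ∈ pathEdges l → o u y → False := by
    intro u hp hou
    exact hynt (snd_mem_tail' (htgt y u hp hou))
  have hd3 : ∀ w, w ∈ l → ∀ u, s(w,u) ∉ pathEdges l → o w u → s(w,u) ∈ Red → False := by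
    intro w hwl u hnp hou hur
    rcases last_or_succ hl hwl with hlast | ⟨b, hb⟩
    · subst hlast
      exact hmaximal u ⟨hou, hur⟩
    · have hb' := hpath_arc (w, b) hb
      have hub : u = b := hredu w u b ⟨hou, hur⟩ hb'
      subst hub
      exact hnp ⟨(w, u), hb, rfl⟩
  have hmemR' : ∀ e : Sym2 V, e ∈ exchRed Red x y v ↔ (e ∈ Red ∧ e ≠ s(x,v)) ∨ e = s(x,y) := by
    intro e
    simp only [exchRed, Set.mem_union, Set.mem_diff, Set.mem_singleton_iff]
  -- characterization of new red out-arcs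
  have hRchar : ∀ w u, (exchOrient o x y v l w u ∧ s(w,u) ∈ exchRed Red x y v) ↔
      ((w = y ∧ u = x) ∨
       (s(w,u) ≠ s(x,y) ∧ s(w,u) ≠ s(x,v) ∧ s(w,u) ∈ pathEdges l ∧ o u w) ∨
       (s(w,u) ≠ s(x,y) ∧ s(w,u) ≠ s(x,v) ∧ s(w,u) ∉ pathEdges l ∧ o w u ∧ s(w,u) ∈ Red)) := by
    intro w u
    simp only [exchOrient]
    rw [hmemR' (s(w,u))]
    by_cases h1 : s(w,u) = s(x,y)
    · rw [if_pos h1]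
      constructor
      · rintro ⟨hwu, _⟩; exact Or.inl hwu
      · rintro (hwu | h | h)
        · exact ⟨hwu, Or.inr h1⟩
        · exact absurd h1 h.1
        · exact absurd h1 h.1
    · rw [if_neg h1]
      by_cases h2 : s(w,u) = s(x,v)
      · rw [if_pos h2]
        constructor
        · rintro ⟨⟨rfl, rfl⟩, hr | hr⟩
          · exact absurd h2 hr.2
          · exact absurd hr h1
        · rintro (⟨rfl, rfl⟩ | h | h)
          · exact absurd Sym2.eq_swap h1
          · exact absurd h2 h.2.1
          · exact absurd h2 h.2.1
      · rw [if_neg h2]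
        by_cases h3 : s(w,u) ∈ pathEdges l
        · rw [if_pos h3]
          constructor
          · rintro ⟨huw, _⟩; exact Or.inr (Or.inl ⟨h1, h2, h3, huw⟩)
          · rintro (⟨rfl, rfl⟩ | h | h)
            · exact absurd Sym2.eq_swap h1
            · exact ⟨h.2.2.2, Or.inl ⟨hpathRed _ h3, h2⟩⟩
            · exact absurd h3 h.2.2.1
        · rw [if_neg h3]
          constructor
          · rintro ⟨hwu, hr | hr⟩
            · exact Or.inr (Or.inr ⟨h1, h2, h3, hwu, hr.1⟩)
            · exact absurd hr h1
          · rintro (⟨rfl, rfl⟩ | h | h)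
            · exact absurd Sym2.eq_swap h1
            · exact absurd h.2.2.1 (fun hq => h3 hq)
            · exact ⟨h.2.2.2.1, Or.inl ⟨h.2.2.2.2, h2⟩⟩
  -- characterization of new blue out-arcs
  have hBchar : ∀ w u, (exchOrient o x y v l w u ∧ s(w,u) ∉ exchRed Red x y v) ↔
      ((w = x ∧ u = v) ∨ (s(w,u) ≠ s(x,y) ∧ o w u ∧ s(w,u) ∉ Red)) := by
    intro w u
    simp only [exchOrient]
    rw [hmemR' (s(w,u))]
    by_cases h1 : s(w,u) = s(x,y)
    · rw [if_pos h1]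
      constructor
      · rintro ⟨_, hn⟩; exact absurd (Or.inr h1) hn
      · rintro (⟨rfl, rfl⟩ | h)
        · exact absurd h1 (h1 ▸ hexy)
        · exact absurd h1 h.1
    · rw [if_neg h1]
      by_cases h2 : s(w,u) = s(x,v)
      · rw [if_pos h2]
        constructor
        · rintro ⟨hwu, _⟩; exact Or.inl hwu
        · rintro (hwu | h)
          · refine ⟨hwu, ?_⟩
            rintro (⟨_, hne⟩ | he)
            · exact hne h2
            · exact h1 he
          · exact absurd (h2 ▸ hxvred) h.2.2
      · rw [if_neg h2]
        by_cases h3 : s(w,u) ∈ pathEdges l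
        · rw [if_pos h3]
          constructor
          · rintro ⟨_, hn⟩; exact absurd (Or.inl ⟨hpathRed _ h3, h2⟩) hn
          · rintro (⟨rfl, rfl⟩ | h)
            · exact absurd rfl h2
            · exact absurd (hpathRed _ h3) h.2.2
        · rw [if_neg h3]
          constructor
          · rintro ⟨hwu, hn⟩
            refine Or.inr ⟨h1, hwu, fun hr => hn (Or.inl ⟨hr, h2⟩)⟩
          · rintro (⟨rfl, rfl⟩ | h)
            · exact absurd rfl h2
            · refine ⟨h.2.1, ?_⟩
              rintro (⟨hr, _⟩ | he)
              · exact h.2.2 hr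
              · exact h1 he
  -- new blue out-degree is k
  have hblue' : ∀ w, blueOutDeg (exchOrient o x y v l) (exchRed Red x y v) w = k := by
    intro w
    unfold blueOutDeg
    by_cases hw : w = x
    · subst hw
      have hset : {u | exchOrient o w y v l w u ∧ s(w,u) ∉ exchRed Red w y v}
          = insert v ({u | o w u ∧ s(w,u) ∉ Red} \ {y}) := by
        ext u
        rw [Set.mem_setOf_eq, hBchar w u]
        simp only [Set.mem_insert_iff, Set.mem_diff, Set.mem_setOf_eq, Set.mem_singleton_iff]
        constructor
        · rintro (⟨_, rfl⟩ | ⟨hne, hou, hnr⟩)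
          · exact Or.inl rfl
          · right
            refine ⟨⟨hou, hnr⟩, ?_⟩
            rintro rfl
            exact hne rfl
        · rintro (rfl | ⟨⟨hou, hnr⟩, huy⟩)
          · exact Or.inl (by simp)
          · right
            refine ⟨?_, hou, hnr⟩
            intro h
            rcases Sym2.eq_iff.mp h with ⟨-, h2⟩ | ⟨h1, h2⟩
            · exact huy h2
            · exact hxyne h1
      rw [hset]
      have hyB : y ∈ {u | o w u ∧ s(w,u) ∉ Red} := ⟨hxy, hxyblue⟩
      have hvB : v ∉ {u | o w u ∧ s(w,u) ∉ Red} \ {y} := fun h => h.1.2 hxvred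
      rw [Set.ncard_insert_of_notMem hvB (Set.toFinite _),
        Set.ncard_diff_singleton_of_mem hyB]
      have hbx := hblue w
      unfold blueOutDeg at hbx
      omega
    · have hset : {u | exchOrient o x y v l w u ∧ s(w,u) ∉ exchRed Red x y v}
          = {u | o w u ∧ s(w,u) ∉ Red} := by
        ext u
        rw [Set.mem_setOf_eq, hBchar w u, Set.mem_setOf_eq]
        constructor
        · rintro (⟨h1, -⟩ | h)
          · exact absurd h1 hw
          · exact ⟨h.2.1, h.2.2⟩
        · intro h
          right
          refine ⟨?_, h.1, h.2⟩
          intro heq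
          rcases Sym2.eq_iff.mp heq with ⟨h1, h2⟩ | ⟨h1, h2⟩
          · exact hw h1
          · subst h1; subst h2
            exact hnoyx h.1
      rw [hset]
      exact hblue w
  -- new red out-sets are subsingletons
  have hredsub : ∀ w, {u | exchOrient o x y v l w u ∧
      s(w,u) ∈ exchRed Red x y v}.Subsingleton := by
    intro w u1 hu1 u2 hu2
    rw [Set.mem_setOf_eq, hRchar w u1] at hu1
    rw [Set.mem_setOf_eq, hRchar w u2] at hu2
    rcases hu1 with ⟨hwy1, rfl⟩ | ⟨-, -, hp1, ho1⟩ | ⟨-, -, hnp1, ho1, hr1⟩ <;>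
      rcases hu2 with ⟨hwy2, rfl⟩ | ⟨-, -, hp2, ho2⟩ | ⟨-, -, hnp2, ho2, hr2⟩
    · rfl
    · exact absurd (hwy1 ▸ hp2) (fun hq => hd2y u2 hq (hwy1 ▸ ho2))
    · exact absurd hr2 (fun hq => hd3 w (hwy1 ▸ hyl) u2 hnp2 ho2 hq)
    · exact absurd (hwy2 ▸ hp1) (fun hq => hd2y u1 hq (hwy2 ▸ ho1))
    · exact zip_tail_snd_unique hnodup (u1, w) (htgt w u1 hp1 ho1) (u2, w) (htgt w u2 hp2 ho2) rfl
    · exfalso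
      have hwl : w ∈ l := List.mem_of_mem_tail (snd_mem_tail' (htgt w u1 hp1 ho1))
      exact hd3 w hwl u2 hnp2 ho2 hr2
    · exact absurd hr1 (fun hq => hd3 w (hwy2 ▸ hyl) u1 hnp1 ho1 hq)
    · exfalso
      have hwl : w ∈ l := List.mem_of_mem_tail (snd_mem_tail' (htgt w u2 hp2 ho2))
      exact hd3 w hwl u1 hnp1 ho1 hr1
    · exact hredu w u1 u2 ⟨ho1, hr1⟩ ⟨ho2, hr2⟩
  have hred' : ∀ w, redOutDeg (exchOrient o x y v l) (exchRed Red x y v) w ≤ 1 := by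
    intro w
    unfold redOutDeg
    rcases (hredsub w).eq_empty_or_singleton with h | ⟨a, h⟩
    · rw [h]; simp
    · rw [h]; simp
  have houtdeg' : ∀ w, outDeg (exchOrient o x y v l) w = k ∨
      outDeg (exchOrient o x y v l) w = k + 1 := by
    intro w
    have h0 := outDeg_split' (exchOrient o x y v l) (exchRed Red x y v) w
    have h1 := hblue' w
    have h2 := hred' w
    omega
  refine ⟨⟨?_, ?_⟩, houtdeg', hblue', hred'⟩
  · intro a b hab
    simp only [exchOrient] at hab
    split_ifs at hab with h1 h2 h3
    · obtain ⟨rfl, rfl⟩ := hab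
      exact hGxy.symm
    · obtain ⟨rfl, rfl⟩ := hab
      exact hxv
    · exact (horient.1 b a hab).symm
    · exact horient.1 a b hab
  · intro a b hadj
    have hsw : s(b,a) = s(a,b) := Sym2.eq_swap
    simp only [exchOrient, hsw]
    split_ifs with h1 h2 h3
    · rcases Sym2.eq_iff.mp h1 with ⟨rfl, rfl⟩ | ⟨rfl, rfl⟩
      · simp [hxyne, Ne.symm hxyne]
      · simp [hxyne, Ne.symm hxyne]
    · rcases Sym2.eq_iff.mp h2 with ⟨rfl, rfl⟩ | ⟨rfl, rfl⟩
      · simp [hxvne, Ne.symm hxvne]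
      · simp [hxvne, Ne.symm hxvne]
    · have h := horient.2 a b hadj
      tauto
    · exact horient.2 a b hadj
end
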